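/- arXiv:0904.0927 — 4 statements merged into one kernel-verified Lean document; each statement's English description precedes it below -/
import Mathlib

section
/- Let k be a field, n ≥ 1, and R = k[x_1, …, x_n]. For a subset I ⊆ {1,…,n} write R_I := R/(x_i : i ∈ I), with R_∅ = R. Form the complex C^0 = R, C^q = ⊕_{|I| = q} R_I for 1 ≤ q ≤ n, whose differential C^q → C^{q+1} has, for I ⊂ J with J = I ∪ {j}, component equal to (−1)^{s} times the canonical surjection R_I → R_J, where s is the number of elements of J smaller than j (Čech-style alternating signs). Then d ∘ d = 0, the kernel of C^0 → C^1 is the principal ideal (x_1 ⋯ x_n), the complex is exact at C^q for every 1 ≤ q ≤ n−1, and the last differential C^{n−1} → C^n = R/(x_1,…,x_n) is surjective. Equivalently, the augmented complex 0 → (x_1⋯x_n) → R → ⊕_i R/(x_i) → ⊕_{i<j} R/(x_i,x_j) → ⋯ → R/(x_1,…,x_n) → 0 is exact. -/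
set_option maxHeartbeats 1000000

noncomputable section

open MvPolynomial
open scoped DirectSum

/-- The ideal `(x_i : i ∈ I)` of `k[x_1,…,x_n]` generated by the variables indexed by
`I ⊆ {1,…,n}`. -/
def idlOf (k : Type*) [Field k] (n : ℕ) (I : Finset (Fin n)) :
    Ideal (MvPolynomial (Fin n) k) :=
  Ideal.span (MvPolynomial.X '' (I : Set (Fin n)))

/-- The `q`-th term `C^q = ⊕_{|I| = q} R/(x_i : i ∈ I)` of the Čech-style complex. -/
abbrev KosC (k : Type*) [Field k] (n q : ℕ) : Type _ :=
  ⨁ (I : {I : Finset (Fin n) // I.card = q}), (MvPolynomial (Fin n) k ⧸ idlOf k n I.1)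

/-- The canonical surjection `R_I → R_J` for `I ⊆ J`, as an `R`-linear map. -/
def quotFactor (k : Type*) [Field k] (n : ℕ) {I J : Finset (Fin n)} (h : I ⊆ J) :
    (MvPolynomial (Fin n) k ⧸ idlOf k n I) →ₗ[MvPolynomial (Fin n) k]
      (MvPolynomial (Fin n) k ⧸ idlOf k n J) :=
  Submodule.mapQ _ _ LinearMap.id
    (by
      intro x hx
      exact Ideal.span_mono (Set.image_mono (by exact_mod_cast h)) hx)

/-- The component of the differential out of the summand indexed by `I`, with Čech-style
alternating signs: the `J = I ∪ {j}`-component is `(-1)^s` times the canonical surjection,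
`s` being the number of elements of `J` smaller than `j`. -/
def kosDAux (k : Type*) [Field k] (n q : ℕ) (I : {I : Finset (Fin n) // I.card = q}) :
    (MvPolynomial (Fin n) k ⧸ idlOf k n I.1) →ₗ[MvPolynomial (Fin n) k] KosC k n (q + 1) :=
  ∑ j : Fin n,
    if h : j ∈ I.1 then 0
    else
      ((-1 : ℤ) ^ (((insert j I.1).filter (fun x => x < j)).card)) •
        (DirectSum.lof (MvPolynomial (Fin n) k) _
            (fun J : {J : Finset (Fin n) // J.card = q + 1} =>
              MvPolynomial (Fin n) k ⧸ idlOf k n J.1)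
            ⟨insert j I.1, by rw [Finset.card_insert_of_notMem h, I.2]⟩).comp
          (quotFactor k n (Finset.subset_insert j I.1))

/-- The differential `C^q → C^{q+1}` of the Čech-style complex. -/
def kosD (k : Type*) [Field k] (n q : ℕ) :
    KosC k n q →ₗ[MvPolynomial (Fin n) k] KosC k n (q + 1) :=
  DirectSum.toModule _ _ _ (kosDAux k n q)

namespace KoszulCech

variable {k : Type*} [Field k] {n : ℕ}

/-- sign -/
def ε (j : Fin n) (J : Finset (Fin n)) : ℤ := (-1) ^ ((J.filter (fun x => x < j)).card)

lemma sign_insert (j : Fin n) (J : Finset (Fin n)) :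
    ((-1 : ℤ) ^ (((insert j J).filter (fun x => x < j)).card)) = ε j J := by
  rw [ε, Finset.filter_insert, if_neg (lt_irrefl j)]

def ofQ (q : ℕ) (J : Finset (Fin n)) (hJ : J.card = q) (f : MvPolynomial (Fin n) k) :
    KosC k n q :=
  DirectSum.of
    (fun I : {I : Finset (Fin n) // I.card = q} => MvPolynomial (Fin n) k ⧸ idlOf k n I.1)
    ⟨J, hJ⟩ (Submodule.Quotient.mk f)

lemma ofQ_congr (q : ℕ) {J J' : Finset (Fin n)} (h : J = J') (hJ : J.card = q)
    (hJ' : J'.card = q) (f : MvPolynomial (Fin n) k) : ofQ q J hJ f = ofQ q J' hJ' f := by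
  subst h; rfl

lemma ofQ_add (q : ℕ) (J : Finset (Fin n)) (hJ : J.card = q) (f g : MvPolynomial (Fin n) k) :
    ofQ q J hJ (f + g) = ofQ q J hJ f + ofQ q J hJ g := by
  rw [ofQ, ofQ, ofQ, Submodule.Quotient.mk_add, map_add]

lemma kosD_ofQ (q : ℕ) (J : Finset (Fin n)) (hJ : J.card = q) (f : MvPolynomial (Fin n) k) :
    kosD k n q (ofQ q J hJ f) =
      ∑ j : Fin n,
        if h : j ∈ J then 0
        else ε j J • ofQ (q + 1) (insert j J)
          (by rw [Finset.card_insert_of_notMem h, hJ]) f := by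
  rw [ofQ, ← DirectSum.lof_eq_of (MvPolynomial (Fin n) k), kosD, DirectSum.toModule_lof,
    kosDAux, LinearMap.sum_apply]
  refine Finset.sum_congr rfl fun j _ => ?_
  by_cases h : j ∈ J
  · simp [h]
  · simp only [h, dite_false, LinearMap.smul_apply, LinearMap.comp_apply, sign_insert]
    rw [DirectSum.lof_eq_of]
    rfl


lemma X_mem_idl {i : Fin n} {J : Finset (Fin n)} (h : i ∈ J) : X i ∈ idlOf k n J :=
  Ideal.subset_span ⟨i, h, rfl⟩

lemma single_add_tsub {m : Fin n →₀ ℕ} {i : Fin n} (h : i ∈ m.support) :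
    Finsupp.single i 1 + (m - Finsupp.single i 1) = m := by
  have hm : m i ≠ 0 := Finsupp.mem_support_iff.mp h
  ext a
  rcases eq_or_ne a i with rfl | hne
  · simp only [Finsupp.add_apply, Finsupp.tsub_apply, Finsupp.single_eq_same]
    omega
  · simp [Finsupp.add_apply, Finsupp.tsub_apply, Finsupp.single_apply, hne.symm]

lemma monomial_factor {m : Fin n →₀ ℕ} {i : Fin n} (h : i ∈ m.support) (c : k) :
    monomial m c = X i * monomial (m - Finsupp.single i 1) c := by
  rw [X, monomial_mul, one_mul, single_add_tsub h]

lemma monomial_mem_idl {m : Fin n →₀ ℕ} {J : Finset (Fin n)}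
    (h : (m.support ∩ J).Nonempty) (c : k) : monomial m c ∈ idlOf k n J := by
  obtain ⟨i, hi⟩ := h
  rw [Finset.mem_inter] at hi
  rw [monomial_factor hi.1 c]
  exact Ideal.mul_mem_right _ _ (X_mem_idl hi.2)

lemma ofQ_zero (q : ℕ) (J : Finset (Fin n)) (hJ : J.card = q) {m : Fin n →₀ ℕ} (c : k)
    (h : (m.support ∩ J).Nonempty) : ofQ q J hJ (monomial m c) = 0 := by
  rw [ofQ, (Submodule.Quotient.mk_eq_zero _).mpr (monomial_mem_idl h c), map_zero]

lemma filter_lt_insert_of_lt {j l : Fin n} {I : Finset (Fin n)} (hj : j ∉ I) (hjl : j < l) :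
    ((insert j I).filter (fun x => x < l)).card = (I.filter (fun x => x < l)).card + 1 := by
  rw [Finset.filter_insert, if_pos hjl, Finset.card_insert_of_notMem]
  simp [hj]

lemma filter_lt_insert_of_ge {j l : Fin n} {I : Finset (Fin n)} (hjl : ¬ l < j) :
    ((insert l I).filter (fun x => x < j)).card = (I.filter (fun x => x < j)).card := by
  rw [Finset.filter_insert, if_neg hjl]

lemma sign_skew {j l : Fin n} {I : Finset (Fin n)} (hj : j ∉ I) (hl : l ∉ I) (hne : j ≠ l) :
    ε j I * ε l (insert j I) = -(ε l I * ε j (insert l I)) := by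
  have key : ∀ j l : Fin n, j ∉ I → j < l →
      ε j I * ε l (insert j I) = -(ε l I * ε j (insert l I)) := by
    intro j l hj hjl
    unfold ε
    rw [filter_lt_insert_of_lt hj hjl, filter_lt_insert_of_ge (not_lt.mpr hjl.le)]
    ring
  rcases hne.lt_or_gt with h | h
  · exact key j l hj h
  · have := key l j hl h
    linarith

lemma dd_ofQ (q : ℕ) (J : Finset (Fin n)) (hJ : J.card = q) (f : MvPolynomial (Fin n) k) :
    kosD k n (q + 1) (kosD k n q (ofQ q J hJ f)) = 0 := by
  classical
  have expand : kosD k n (q + 1) (kosD k n q (ofQ q J hJ f)) =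
      ∑ p : Fin n × Fin n,
        (if hj : p.1 ∈ J then 0
         else if hl : p.2 ∈ insert p.1 J then 0
         else (ε p.1 J * ε p.2 (insert p.1 J)) •
           ofQ (q + 1 + 1) (insert p.2 (insert p.1 J))
             (by rw [Finset.card_insert_of_notMem hl, Finset.card_insert_of_notMem hj, hJ]) f) := by
    rw [kosD_ofQ, map_sum, ← Finset.univ_product_univ, Finset.sum_product]
    refine Finset.sum_congr rfl fun j _ => ?_
    by_cases hj : j ∈ J
    · simp [hj]
    · rw [dif_neg hj, map_zsmul, kosD_ofQ, Finset.smul_sum]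
      refine Finset.sum_congr rfl fun l _ => ?_
      by_cases hl : l ∈ insert j J
      · simp [hj, hl]
      · rw [dif_neg hl, dif_neg hj, dif_neg hl, smul_smul]
  rw [expand]
  refine Finset.sum_ninvolution Prod.swap ?_ ?_ (fun _ => Finset.mem_univ _) (fun p => rfl) 
  · rintro ⟨j, l⟩
    simp only [Prod.swap_prod_mk]
    by_cases hj : j ∈ J
    · by_cases hl : l ∈ J <;>
        simp [hj, hl, Finset.mem_insert]
    · by_cases hl : l ∈ J
      · simp [hj, hl, Finset.mem_insert]
      · rcases eq_or_ne j l with rfl | hne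
        · simp
        · rw [dif_neg hj, dif_neg hl,
            dif_neg (by simp [hne.symm, hl] : ¬ l ∈ insert j J),
            dif_neg (by simp [hne, hj] : ¬ j ∈ insert l J)]
          have hcomm := Finset.insert_comm l j J
          have hcard' : (insert j (insert l J)).card = q + 1 + 1 := by
            rw [Finset.card_insert_of_notMem (by simp [hne, hj]),
              Finset.card_insert_of_notMem hl, hJ]
          rw [ofQ_congr (q+1+1) hcomm _ hcard', ← add_smul, sign_skew hj hl hne,
            neg_add_cancel, zero_smul]
  · rintro ⟨j, l⟩ hF heq
    rw [Prod.swap_prod_mk, Prod.mk.injEq] at heq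
    have h1 : l = j := heq.1
    subst h1
    apply hF
    by_cases hj : l ∈ J <;> simp [hj]

lemma kosD_comp_kosD (q : ℕ) : (kosD k n (q + 1)).comp (kosD k n q) = 0 := by
  classical
  apply LinearMap.ext
  intro x
  induction x using DirectSum.induction_on with
  | zero => simp
  | of i y =>
    obtain ⟨f, rfl⟩ := Submodule.Quotient.mk_surjective _ y
    have : (DirectSum.of (fun I : {I : Finset (Fin n) // I.card = q} =>
        MvPolynomial (Fin n) k ⧸ idlOf k n I.1) i (Submodule.Quotient.mk f)) =
        ofQ q i.1 i.2 f := rfl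
    rw [LinearMap.comp_apply, this, dd_ofQ, LinearMap.zero_apply]
  | add x y hx hy =>
    rw [LinearMap.comp_apply, map_add, map_add, ← LinearMap.comp_apply, ← LinearMap.comp_apply,
      hx, hy]
    simp


/-! ### Part 2 ingredients -/

def uAll (n : ℕ) : Fin n →₀ ℕ := Finsupp.equivFunOnFinite.symm (fun _ => 1)

lemma uAll_apply (j : Fin n) : uAll n j = 1 := rfl

lemma prod_X_eq (k : Type*) [Field k] (n : ℕ) :
    (∏ i : Fin n, (X i : MvPolynomial (Fin n) k)) = monomial (uAll n) 1 := by
  rw [← prod_X_pow_eq_monomial]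
  have hsupp : (uAll n).support = Finset.univ := by
    ext j; simp [Finsupp.mem_support_iff, uAll_apply]
  rw [hsupp]
  exact Finset.prod_congr rfl fun i _ => by rw [uAll_apply, pow_one]

lemma monomial_one_dvd_iff {u : Fin n →₀ ℕ} {f : MvPolynomial (Fin n) k} :
    monomial u (1 : k) ∣ f ↔ ∀ d ∈ f.support, u ≤ d := by
  rw [← Ideal.mem_span_singleton, ← Set.image_singleton (f := fun s => monomial s (1:k)),
    mem_ideal_span_monomial_image]
  simp

lemma X_dvd_iff' {j : Fin n} {f : MvPolynomial (Fin n) k} :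
    (X j : MvPolynomial (Fin n) k) ∣ f ↔ ∀ d ∈ f.support, 1 ≤ d j := by
  rw [X, monomial_one_dvd_iff]
  simp_rw [Finsupp.single_le_iff]

lemma all_X_dvd_iff {f : MvPolynomial (Fin n) k} :
    (∀ j : Fin n, (X j : MvPolynomial (Fin n) k) ∣ f) ↔
      (∏ i : Fin n, (X i : MvPolynomial (Fin n) k)) ∣ f := by
  rw [prod_X_eq, monomial_one_dvd_iff]
  simp_rw [X_dvd_iff']
  constructor
  · intro h d hd j
    rw [uAll_apply]
    exact h j d hd
  · intro h j d hd
    have := h d hd j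
    rwa [uAll_apply] at this

lemma idlOf_singleton_mem {j : Fin n} {f : MvPolynomial (Fin n) k} :
    f ∈ idlOf k n {j} ↔ (X j : MvPolynomial (Fin n) k) ∣ f := by
  rw [idlOf, Finset.coe_singleton, Set.image_singleton, Ideal.mem_span_singleton]

lemma part2 (f : MvPolynomial (Fin n) k) :
    kosD k n 0 (ofQ 0 ∅ Finset.card_empty f) = 0 ↔
      f ∈ Ideal.span {∏ i : Fin n, (MvPolynomial.X i : MvPolynomial (Fin n) k)} := by
  classical
  rw [kosD_ofQ]
  have hε : ∀ j : Fin n, ε j (∅ : Finset (Fin n)) = 1 := by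
    intro j; simp [ε]
  have hsum : ∀ j : Fin n,
      (if h : j ∈ (∅ : Finset (Fin n)) then 0
        else ε j ∅ • ofQ (0+1) (insert j ∅)
          (by rw [Finset.card_insert_of_notMem h, Finset.card_empty]) f) =
      ofQ 1 {j} (Finset.card_singleton j) f := by
    intro j
    rw [dif_neg (Finset.notMem_empty j), hε, one_smul]
    exact ofQ_congr _ (by simp) _ _ f
  rw [Finset.sum_congr rfl fun j _ => hsum j]
  constructor
  · intro h
    rw [Ideal.mem_span_singleton, ← all_X_dvd_iff]
    intro j
    rw [← idlOf_singleton_mem, ← Submodule.Quotient.mk_eq_zero]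
    have h' := congrArg (DirectSum.component (MvPolynomial (Fin n) k) _ _
      (⟨{j}, Finset.card_singleton j⟩ : {I : Finset (Fin n) // I.card = 1})) h
    rw [map_sum, map_zero] at h'
    rw [Finset.sum_eq_single j (fun l _ hne => ?_) (fun hj => absurd (Finset.mem_univ j) hj)] at h'
    · rw [ofQ, ← DirectSum.lof_eq_of (MvPolynomial (Fin n) k),
        DirectSum.component.lof_self] at h'
      exact h'
    · rw [ofQ, ← DirectSum.lof_eq_of (MvPolynomial (Fin n) k), DirectSum.component.of,
        dif_neg]
      simp [Subtype.ext_iff, hne]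
  · intro hf
    refine Finset.sum_eq_zero fun j _ => ?_
    have hdvd : (X j : MvPolynomial (Fin n) k) ∣ f :=
      all_X_dvd_iff.mpr (Ideal.mem_span_singleton.mp hf) j
    rw [ofQ, (Submodule.Quotient.mk_eq_zero _).mpr (idlOf_singleton_mem.mpr hdvd), map_zero]


/-! ### Part 4: surjectivity of the last differential -/

lemma part4 (hn : 1 ≤ n) : Function.Surjective (kosD k n (n - 1)) := by
  classical
  have hsucc : n - 1 + 1 = n := Nat.succ_pred_eq_of_pos hn
  intro y
  induction y using DirectSum.induction_on with
  | zero => exact ⟨0, map_zero _⟩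
  | of i x =>
    obtain ⟨i1, hi1⟩ := i
    obtain ⟨f, rfl⟩ := Submodule.Quotient.mk_surjective _ x
    have hiuniv : i1 = Finset.univ := by
      apply Finset.eq_univ_of_card
      rw [hi1, hsucc, Fintype.card_fin]
    subst hiuniv
    set j0 : Fin n := ⟨0, hn⟩ with hj0
    have hmem : j0 ∈ (Finset.univ : Finset (Fin n)) := Finset.mem_univ _
    have hJcard : (Finset.univ.erase j0).card = n - 1 := by
      rw [Finset.card_erase_of_mem hmem, Finset.card_univ, Fintype.card_fin]
    refine ⟨ofQ (n-1) (Finset.univ.erase j0) hJcard f, ?_⟩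
    rw [kosD_ofQ]
    rw [Finset.sum_eq_single j0 (fun l _ hne => ?_) (fun h => absurd (Finset.mem_univ j0) h)]
    · rw [dif_neg (Finset.notMem_erase j0 Finset.univ)]
      have hε : ε j0 (Finset.univ.erase j0) = 1 := by
        have : (Finset.univ.erase j0).filter (fun x => x < j0) = ∅ := by
          apply Finset.filter_eq_empty_iff.mpr
          intro x _
          rw [Fin.lt_def]
          exact Nat.not_lt_zero _
        rw [ε, this]
        simp
      rw [hε, one_smul]
      have hins : insert j0 (Finset.univ.erase j0) = Finset.univ := Finset.insert_erase hmem
      rw [ofQ_congr _ hins _ (by rw [Finset.card_univ, Fintype.card_fin]; omega)]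
      rfl
    · rw [dif_pos (Finset.mem_erase.mpr ⟨hne, Finset.mem_univ l⟩)]
  | add a b ha hb =>
    obtain ⟨xa, hxa⟩ := ha
    obtain ⟨xb, hxb⟩ := hb
    exact ⟨xa + xb, by rw [map_add, hxa, hxb]⟩


/-! ### The contracting homotopy -/

def Hfun (q : ℕ) (I : {I : Finset (Fin n) // I.card = q + 1}) (m : Fin n →₀ ℕ) :
    k →ₗ[k] KosC k n q :=
  ∑ j : Fin n,
    if hj : j ∈ I.1 ∧ (m.support ∩ I.1 = ∅) ∧ (m.supportᶜ).min = (j : WithTop (Fin n)) then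
      ε j I.1 •
        ((DirectSum.lof k {J : Finset (Fin n) // J.card = q}
            (fun J => MvPolynomial (Fin n) k ⧸ idlOf k n J.1)
            ⟨I.1.erase j, by rw [Finset.card_erase_of_mem hj.1, I.2]; omega⟩).comp
          (((idlOf k n (I.1.erase j)).mkQ.restrictScalars k).comp
            (monomial m : k →ₗ[k] MvPolynomial (Fin n) k)))
    else 0

lemma Hfun_bad (q : ℕ) (I : {I : Finset (Fin n) // I.card = q + 1}) (m : Fin n →₀ ℕ)
    (h : ¬ m.support ∩ I.1 = ∅) : Hfun (k := k) q I m = 0 := by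
  refine Finset.sum_eq_zero fun j _ => ?_
  rw [dif_neg]
  rintro ⟨-, h2, -⟩
  exact h h2

def hAux (q : ℕ) (I : {I : Finset (Fin n) // I.card = q + 1}) :
    MvPolynomial (Fin n) k →ₗ[k] KosC k n q :=
  (Finsupp.lsum k (Hfun q I)).comp (AddMonoidAlgebra.coeffLinearEquiv k).toLinearMap

lemma hAux_monomial (q : ℕ) (I : {I : Finset (Fin n) // I.card = q + 1}) (m : Fin n →₀ ℕ)
    (c : k) : hAux (k := k) q I (monomial m c) = Hfun (k := k) q I m c := by
  rw [hAux, LinearMap.comp_apply, LinearEquiv.coe_coe, AddMonoidAlgebra.coeffLinearEquiv_apply,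
    ← single_eq_monomial, AddMonoidAlgebra.coeff_single]
  exact Finsupp.sum_single_index (map_zero _)

lemma hAux_vanish (q : ℕ) (I : {I : Finset (Fin n) // I.card = q + 1})
    (f : MvPolynomial (Fin n) k) (hf : f ∈ idlOf k n I.1) : hAux (k := k) q I f = 0 := by
  have hchar := (mem_ideal_span_X_image (s := (I.1 : Set (Fin n)))).mp hf
  have : hAux (k := k) q I f = (AddMonoidAlgebra.coeff f).sum fun m c => Hfun (k := k) q I m c := rfl
  rw [this, Finsupp.sum]
  refine Finset.sum_eq_zero fun m hm => ?_
  obtain ⟨i, hi1, hi2⟩ := hchar m hm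
  rw [Hfun_bad]
  · rfl
  · intro hempty
    have : i ∈ m.support ∩ I.1 := Finset.mem_inter.mpr
      ⟨Finsupp.mem_support_iff.mpr hi2, by exact_mod_cast hi1⟩
    rw [hempty] at this
    exact absurd this (Finset.notMem_empty i)

def HAux (q : ℕ) (I : {I : Finset (Fin n) // I.card = q + 1}) :
    (MvPolynomial (Fin n) k ⧸ idlOf k n I.1) →ₗ[k] KosC k n q :=
  (Submodule.liftQ (R₂ := k) (M₂ := KosC k n q) ((idlOf k n I.1).restrictScalars k) (hAux (k := k) q I)
      (fun f hf => LinearMap.mem_ker.mpr (hAux_vanish (k := k) q I f hf))).comp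
    ((Submodule.Quotient.restrictScalarsEquiv k (idlOf k n I.1)).symm.toLinearMap)

lemma HAux_mk (q : ℕ) (I : {I : Finset (Fin n) // I.card = q + 1})
    (f : MvPolynomial (Fin n) k) :
    HAux (k := k) q I (Submodule.Quotient.mk f) = hAux (k := k) q I f := by
  rw [HAux, LinearMap.comp_apply, LinearEquiv.coe_toLinearMap,
    Submodule.Quotient.restrictScalarsEquiv_symm_mk, Submodule.liftQ_apply]

def Hmap (q : ℕ) : KosC k n (q + 1) →ₗ[k] KosC k n q :=
  DirectSum.toModule k _ _ (HAux q)

lemma Hmap_ofQ_monomial (q : ℕ) (J : Finset (Fin n)) (hJ : J.card = q + 1)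
    (m : Fin n →₀ ℕ) (c : k) (hgood : m.support ∩ J = ∅) (j0 : Fin n)
    (hj0 : (m.supportᶜ : Finset (Fin n)).min = (j0 : WithTop (Fin n))) :
    Hmap (k := k) (n := n) q (ofQ (q+1) J hJ (monomial m c)) =
      if hmem : j0 ∈ J then
        ε j0 J • ofQ q (J.erase j0)
          (by rw [Finset.card_erase_of_mem hmem, hJ]; omega) (monomial m c)
      else 0 := by
  classical
  rw [ofQ, ← DirectSum.lof_eq_of k, Hmap, DirectSum.toModule_lof, HAux_mk, hAux_monomial,
    Hfun, LinearMap.sum_apply]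
  rw [Finset.sum_eq_single j0 (fun l _ hne => ?_) (fun h => absurd (Finset.mem_univ j0) h)]
  · by_cases hmem : j0 ∈ J
    · rw [dif_pos ⟨hmem, hgood, hj0⟩, dif_pos hmem]
      rw [LinearMap.smul_apply, LinearMap.comp_apply, LinearMap.comp_apply]
      rw [ofQ, ← DirectSum.lof_eq_of k]
      rfl
    · rw [dif_neg (fun hc => hmem hc.1), dif_neg hmem, LinearMap.zero_apply]
  · have hcond : ¬ (l ∈ J ∧ m.support ∩ J = ∅ ∧
        (m.supportᶜ : Finset (Fin n)).min = (l : WithTop (Fin n))) := by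
      rintro ⟨-, -, h3⟩
      rw [hj0] at h3
      have : j0 = l := by exact_mod_cast h3
      exact hne this.symm
    rw [dif_neg hcond, LinearMap.zero_apply]


lemma eps_sq (j : Fin n) (J : Finset (Fin n)) : ε j J * ε j J = 1 := by
  rw [ε, ← mul_pow]
  norm_num

lemma eps_erase (j : Fin n) (J : Finset (Fin n)) : ε j (J.erase j) = ε j J := by
  rw [ε, ε, Finset.filter_erase, Finset.erase_eq_of_notMem]
  simp

lemma eps_insert_self (j : Fin n) (J : Finset (Fin n)) : ε j (insert j J) = ε j J := by
  rw [ε, ε, Finset.filter_insert, if_neg (lt_irrefl j)]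

lemma sign_cancel {j0 j : Fin n} {J : Finset (Fin n)} (hj0J : j0 ∈ J) (hjJ : j ∉ J)
    (hlt : j0 < j) :
    ε j0 J * ε j (J.erase j0) + ε j J * ε j0 (insert j J) = 0 := by
  have hmemf : j0 ∈ J.filter (fun x => x < j) := Finset.mem_filter.mpr ⟨hj0J, hlt⟩
  have h1 : ((J.erase j0).filter (fun x => x < j)).card =
      (J.filter (fun x => x < j)).card - 1 := by
    rw [Finset.filter_erase, Finset.card_erase_of_mem hmemf]
  have h2 : ((insert j J).filter (fun x => x < j0)).card =
      (J.filter (fun x => x < j0)).card := by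
    rw [Finset.filter_insert, if_neg (not_lt.mpr hlt.le)]
  have hbpos : 1 ≤ (J.filter (fun x => x < j)).card := Finset.card_pos.mpr ⟨j0, hmemf⟩
  obtain ⟨b', hb'⟩ : ∃ b', (J.filter (fun x => x < j)).card = b' + 1 :=
    ⟨_, (Nat.succ_pred_eq_of_pos hbpos).symm⟩
  unfold ε
  rw [h1, h2, hb']
  simp only [Nat.add_sub_cancel]
  ring

lemma homotopy_core (q : ℕ) (J : Finset (Fin n)) (hJ : J.card = q + 1) (m : Fin n →₀ ℕ)
    (c : k) :
    kosD k n q (Hmap (k := k) (n := n) q (ofQ (q+1) J hJ (monomial m c))) +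
      Hmap (k := k) (n := n) (q+1) (kosD k n (q+1) (ofQ (q+1) J hJ (monomial m c))) =
      ofQ (q+1) J hJ (monomial m c) := by
  classical
  by_cases hgood : m.support ∩ J = ∅
  case neg =>
    rw [ofQ_zero _ _ _ _ (Finset.nonempty_iff_ne_empty.mpr hgood)]
    simp
  have hJT : ∀ j ∈ J, j ∈ (m.supportᶜ : Finset (Fin n)) := by
    intro j hj
    rw [Finset.mem_compl]
    intro hsup
    have : j ∈ m.support ∩ J := Finset.mem_inter.mpr ⟨hsup, hj⟩
    rw [hgood] at this
    exact absurd this (Finset.notMem_empty j)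
  have hJne : J.Nonempty := Finset.card_pos.mp (by rw [hJ]; omega)
  obtain ⟨j1, hj1⟩ := hJne
  have hTne : (m.supportᶜ : Finset (Fin n)).Nonempty := ⟨j1, hJT j1 hj1⟩
  set j0 := (m.supportᶜ : Finset (Fin n)).min' hTne with hj0def
  have hj0 : (m.supportᶜ : Finset (Fin n)).min = (j0 : WithTop (Fin n)) :=
    (Finset.coe_min' hTne).symm
  have hj0T : j0 ∈ (m.supportᶜ : Finset (Fin n)) := Finset.min'_mem _ _
  have hj0sup : j0 ∉ m.support := Finset.mem_compl.mp hj0T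
  rw [Hmap_ofQ_monomial q J hJ m c hgood j0 hj0, kosD_ofQ, map_sum]
  -- normalize the B-sum
  have hB : ∀ j : Fin n,
      Hmap (k := k) (n := n) (q+1)
        (if h : j ∈ J then 0
         else ε j J • ofQ (q+1+1) (insert j J)
           (by rw [Finset.card_insert_of_notMem h, hJ]) (monomial m c)) =
      (if hj : j ∈ J then 0
       else if hjs : j ∈ m.support then 0
       else if hj0mem : j0 ∈ insert j J then
         (ε j J * ε j0 (insert j J)) • ofQ (q+1) ((insert j J).erase j0)
           (by rw [Finset.card_erase_of_mem hj0mem, Finset.card_insert_of_notMem hj, hJ]; omega)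
           (monomial m c)
       else 0) := by
    intro j
    by_cases hj : j ∈ J
    · rw [dif_pos hj, dif_pos hj, map_zero]
    rw [dif_neg hj, dif_neg hj, map_zsmul]
    by_cases hjs : j ∈ m.support
    · rw [dif_pos hjs,
        ofQ_zero _ _ _ _ ⟨j, Finset.mem_inter.mpr ⟨hjs, Finset.mem_insert_self j J⟩⟩,
        map_zero, smul_zero]
    rw [dif_neg hjs]
    have hgood' : m.support ∩ insert j J = ∅ := by
      rw [Finset.inter_insert_of_notMem hjs, hgood]
    rw [Hmap_ofQ_monomial (q+1) (insert j J) _ m c hgood' j0 hj0]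
    by_cases hj0mem : j0 ∈ insert j J
    · rw [dif_pos hj0mem, dif_pos hj0mem, smul_smul]
    · rw [dif_neg hj0mem, dif_neg hj0mem, smul_zero]
  rw [Finset.sum_congr rfl fun j _ => hB j]
  by_cases hmem : j0 ∈ J
  · -- case A : j0 ∈ J
    rw [dif_pos hmem, map_zsmul, kosD_ofQ, Finset.smul_sum]
    have hA : ∀ j : Fin n,
        (ε j0 J • if h : j ∈ J.erase j0 then 0
          else ε j (J.erase j0) • ofQ (q+1) (insert j (J.erase j0))
            (by rw [Finset.card_insert_of_notMem h, Finset.card_erase_of_mem hmem, hJ]; omega)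
            (monomial m c)) =
        (if hj : j ∈ J.erase j0 then 0
         else (ε j0 J * ε j (J.erase j0)) • ofQ (q+1) (insert j (J.erase j0))
            (by rw [Finset.card_insert_of_notMem hj, Finset.card_erase_of_mem hmem, hJ]; omega)
            (monomial m c)) := by
      intro j
      by_cases hj : j ∈ J.erase j0
      · rw [dif_pos hj, dif_pos hj, smul_zero]
      · rw [dif_neg hj, dif_neg hj, smul_smul]
    rw [Finset.sum_congr rfl fun j _ => hA j, ← Finset.sum_add_distrib]
    rw [Finset.sum_eq_single j0 (fun j _ hne => ?_)
      (fun h => absurd (Finset.mem_univ j0) h)]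
    · -- the j0 term equals e
      rw [dif_neg (Finset.notMem_erase j0 J), dif_pos hmem, add_zero,
        ofQ_congr _ (Finset.insert_erase hmem) _ hJ, eps_erase, eps_sq, one_smul]
    · -- other terms vanish
      by_cases hj : j ∈ J
      · rw [dif_pos (Finset.mem_erase.mpr ⟨hne, hj⟩), dif_pos hj, add_zero]
      have hjJ0 : j ∉ J.erase j0 := fun h => hj (Finset.mem_of_mem_erase h)
      rw [dif_neg hjJ0, dif_neg hj]
      by_cases hjs : j ∈ m.support
      · rw [dif_pos hjs,
          ofQ_zero _ _ _ _ ⟨j, Finset.mem_inter.mpr ⟨hjs, Finset.mem_insert_self _ _⟩⟩,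
          smul_zero, add_zero]
      rw [dif_neg hjs]
      have hj0mem : j0 ∈ insert j J := Finset.mem_insert_of_mem hmem
      rw [dif_pos hj0mem]
      have hjT : j ∈ (m.supportᶜ : Finset (Fin n)) := Finset.mem_compl.mpr hjs
      have hlt : j0 < j := (Finset.min'_le _ j hjT).lt_of_ne (Ne.symm hne)
      have hset : (insert j J).erase j0 = insert j (J.erase j0) := by
        ext a
        simp only [Finset.mem_erase, Finset.mem_insert]
        constructor
        · rintro ⟨ha, rfl | haJ⟩
          · exact Or.inl rfl
          · exact Or.inr ⟨ha, haJ⟩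
        · rintro (rfl | ⟨ha, haJ⟩)
          · exact ⟨hne, Or.inl rfl⟩
          · exact ⟨ha, Or.inr haJ⟩
      rw [ofQ_congr _ hset _ (by
        rw [Finset.card_insert_of_notMem hjJ0, Finset.card_erase_of_mem hmem, hJ]; omega)]
      rw [← add_smul, sign_cancel hmem hj hlt, zero_smul]
  · -- case B : j0 ∉ J
    rw [dif_neg hmem, map_zero, zero_add]
    rw [Finset.sum_eq_single j0 (fun j _ hne => ?_)
      (fun h => absurd (Finset.mem_univ j0) h)]
    · rw [dif_neg hmem, dif_neg hj0sup, dif_pos (Finset.mem_insert_self j0 J),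
        ofQ_congr _ (Finset.erase_insert hmem) _ hJ, eps_insert_self, eps_sq, one_smul]
    · by_cases hj : j ∈ J
      · rw [dif_pos hj]
      rw [dif_neg hj]
      by_cases hjs : j ∈ m.support
      · rw [dif_pos hjs]
      rw [dif_neg hjs, dif_neg]
      rw [Finset.mem_insert]
      rintro (h | h)
      · exact hne h.symm
      · exact hmem h


lemma homotopy (q : ℕ) (x : KosC k n (q+1)) :
    kosD k n q (Hmap (k := k) (n := n) q x) +
      Hmap (k := k) (n := n) (q+1) (kosD k n (q+1) x) = x := by
  induction x using DirectSum.induction_on with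
  | zero => simp
  | of i y =>
    obtain ⟨i1, hi1⟩ := i
    obtain ⟨f, rfl⟩ := Submodule.Quotient.mk_surjective _ y
    have hof : (DirectSum.of
        (fun I : {I : Finset (Fin n) // I.card = q + 1} =>
          MvPolynomial (Fin n) k ⧸ idlOf k n I.1)
        ⟨i1, hi1⟩ (Submodule.Quotient.mk f)) = ofQ (q+1) i1 hi1 f := rfl
    rw [hof]
    induction f using MvPolynomial.induction_on' with
    | monomial m c => exact homotopy_core q i1 hi1 m c
    | add p r hp hr =>
      rw [ofQ_add, map_add, map_add, map_add, map_add, add_add_add_comm, hp rfl, hr rfl]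
  | add a b ha hb =>
    rw [map_add, map_add, map_add, map_add, add_add_add_comm, ha, hb]

lemma part3 (q : ℕ) :
    LinearMap.range (kosD k n q) = LinearMap.ker (kosD k n (q+1)) := by
  ext x
  constructor
  · rintro ⟨y, rfl⟩
    rw [LinearMap.mem_ker, ← LinearMap.comp_apply, kosD_comp_kosD, LinearMap.zero_apply]
  · intro hx
    rw [LinearMap.mem_ker] at hx
    refine ⟨Hmap (k := k) (n := n) q x, ?_⟩
    have h := homotopy q x
    rwa [hx, map_zero, add_zero] at h

end KoszulCech

/-- For `R = k[x_1,…,x_n]`, `n ≥ 1`, the complex `C^0 = R → ⊕_i R/(x_i) →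
⊕_{i<j} R/(x_i,x_j) → ⋯ → R/(x_1,…,x_n)` with Čech-style alternating signs satisfies
`d ∘ d = 0`; the kernel of `C^0 → C^1` is the principal ideal `(x_1 ⋯ x_n)`; it is exact
at `C^q` for `1 ≤ q ≤ n - 1`; and the last differential `C^{n-1} → C^n` is surjective.
Equivalently, `0 → (x_1⋯x_n) → R → ⊕_i R/(x_i) → ⋯ → R/(x_1,…,x_n) → 0` is exact. -/
theorem koszul_cech_resolution (k : Type*) [Field k] (n : ℕ) (hn : 1 ≤ n) :
    (∀ q, (kosD k n (q + 1)).comp (kosD k n q) = 0) ∧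
    (∀ f : MvPolynomial (Fin n) k,
        kosD k n 0
            (DirectSum.lof (MvPolynomial (Fin n) k) _
              (fun I : {I : Finset (Fin n) // I.card = 0} =>
                MvPolynomial (Fin n) k ⧸ idlOf k n I.1)
              ⟨∅, Finset.card_empty⟩ (Ideal.Quotient.mk (idlOf k n ∅) f)) = 0 ↔
          f ∈ Ideal.span {∏ i : Fin n, (MvPolynomial.X i : MvPolynomial (Fin n) k)}) ∧
    (∀ q, q + 1 ≤ n - 1 →
        LinearMap.range (kosD k n q) = LinearMap.ker (kosD k n (q + 1))) ∧
    Function.Surjective (kosD k n (n - 1)) := by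
  --

  refine ⟨fun q => KoszulCech.kosD_comp_kosD q, fun f => ?_, fun q _ => KoszulCech.part3 q,
    KoszulCech.part4 hn⟩
  have h : (DirectSum.lof (MvPolynomial (Fin n) k) _
      (fun I : {I : Finset (Fin n) // I.card = 0} =>
        MvPolynomial (Fin n) k ⧸ idlOf k n I.1)
      ⟨∅, Finset.card_empty⟩ (Ideal.Quotient.mk (idlOf k n ∅) f)) =
      KoszulCech.ofQ 0 ∅ Finset.card_empty f := by
    rw [DirectSum.lof_eq_of]
    rfl
  rw [h]
  exact KoszulCech.part2 f
end
end

section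
/- Let V be a finite-dimensional vector space over a field k equipped with q filtrations F^1, …, F^q, where F^j assigns to each element σ of a finite linearly ordered set Σ_j (with least element η_j and greatest element τ_j) a subspace F^j_σ ⊆ V, monotonically in σ, with F^j_{η_j} = 0 and F^j_{τ_j} = V. Assume the filtrations admit a common splitting: there is a basis B of V such that every F^j_σ is the span of a subset of B. For covers λ_j ∈ Σ'_j define the multigraded piece Gr_{λ_1,…,λ_q}(V) := (⋂_{j=1}^q F^j_{m_+(λ_j)}) / (Σ_{l=1}^q (F^l_{m_-(λ_l)} ∩ ⋂_{j≠l} F^j_{m_+(λ_j)})). Then: (i) for q = 2 and any covers λ_1 ∈ Σ'_1, λ_2 ∈ Σ'_2, the iterated associated graded taken in either order has the same dimension, i.e. dim Gr_{λ_2}(Gr_{λ_1}^{F^1}(V), induced F^2) = dim Gr_{λ_1}(Gr_{λ_2}^{F^2}(V), induced F^1) = dim Gr_{λ_1,λ_2}(V); and (ii) dim V = Σ over all multi-indices of covers (λ_1,…,λ_q) ∈ Σ'_1 × ⋯ × Σ'_q of dim Gr_{λ_1,…,λ_q}(V). -/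
open scoped Classical

noncomputable section

/-- The dimension of the multigraded piece
`Gr_{λ_1,…,λ_q}(V) = (⋂_j F^j_{m_+(λ_j)}) / (Σ_l (F^l_{m_-(λ_l)} ∩ ⋂_{j ≠ l} F^j_{m_+(λ_j)}))`
attached to a multi-index `lam` of pairs (covers) for a family of filtrations `F`. -/
def grDim (k : Type*) {V : Type*} [Field k] [AddCommGroup V] [Module k V]
    {q : ℕ} {Sig : Fin q → Type*}
    (F : ∀ j, Sig j → Submodule k V) (lam : ∀ j, Sig j × Sig j) : ℕ :=
  Module.finrank k
    (↥(⨅ j, F j (lam j).2) ⧸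
      Submodule.comap (⨅ j, F j (lam j).2).subtype
        (⨆ l, F l (lam l).1 ⊓ ⨅ (j) (_ : j ≠ l), F j (lam j).2))

/-- The dimension of the subquotient `X/(Y ∩ X)` of `V` determined by submodules `X Y ⊆ V`;
for `Y ≤ X` this is `dim X/Y`. -/
def subquotDim (k : Type*) {V : Type*} [Field k] [AddCommGroup V] [Module k V]
    (X Y : Submodule k V) : ℕ :=
  Module.finrank k (↥X ⧸ Submodule.comap X.subtype Y)

set_option linter.unusedSectionVars false

section AuxSpan

variable {k V : Type*} [Field k] [AddCommGroup V] [Module k V]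
variable {ι : Type} [Fintype ι] (B : Module.Basis ι k V)

lemma spanS_iInf {J : Sort*} (S : J → Set ι) :
    Submodule.span k (B '' ⋂ j, S j) = ⨅ j, Submodule.span k (B '' S j) := by
  apply le_antisymm
  · exact le_iInf fun j => Submodule.span_mono (Set.image_mono (Set.iInter_subset _ j))
  · intro x hx
    rw [Submodule.mem_iInf] at hx
    rw [Module.Basis.mem_span_image]
    intro i hi
    rw [Set.mem_iInter]
    exact fun j => (B.mem_span_image.1 (hx j)) hi

lemma spanS_inf (X Y : Set ι) :
    Submodule.span k (B '' (X ∩ Y)) = Submodule.span k (B '' X) ⊓ Submodule.span k (B '' Y) := by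
  apply le_antisymm
  · exact le_inf (Submodule.span_mono (Set.image_mono Set.inter_subset_left))
      (Submodule.span_mono (Set.image_mono Set.inter_subset_right))
  · intro x hx
    rw [Submodule.mem_inf] at hx
    rw [Module.Basis.mem_span_image]
    exact fun i hi => ⟨(B.mem_span_image.1 hx.1) hi, (B.mem_span_image.1 hx.2) hi⟩

lemma spanS_iSup {J : Sort*} (S : J → Set ι) :
    Submodule.span k (B '' ⋃ j, S j) = ⨆ j, Submodule.span k (B '' S j) := by
  rw [Set.image_iUnion, Submodule.span_iUnion]

lemma finrank_spanS (S : Set ι) :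
    Module.finrank k (Submodule.span k (B '' S)) = S.ncard := by
  have hfin : (B '' S).Finite := (S.toFinite).image B
  haveI := hfin.fintype
  have hli : LinearIndependent k ((↑) : (B '' S) → V) :=
    (B.linearIndependent.linearIndepOn_id).mono (Set.image_subset_range B S)
  rw [finrank_span_set_eq_card hli, ← Set.ncard_eq_toFinset_card',
    Set.ncard_image_of_injective S B.injective]

lemma subquotDim_spanS (X Y : Set ι) :
    subquotDim k (Submodule.span k (B '' X)) (Submodule.span k (B '' Y)) = (X \ Y).ncard := by
  haveI : FiniteDimensional k V := Module.Finite.of_basis B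
  set Xs := Submodule.span k (B '' X)
  set Ys := Submodule.span k (B '' Y)
  have hc : Submodule.comap Xs.subtype Ys = Submodule.comap Xs.subtype (Ys ⊓ Xs) := by
    ext z
    simp [Submodule.mem_comap, z.2]
  have hle : Submodule.span k (B '' (Y ∩ X)) ≤ Xs :=
    Submodule.span_mono (Set.image_mono Set.inter_subset_right)
  have e : (Submodule.comap Xs.subtype Ys) ≃ₗ[k] (Submodule.span k (B '' (Y ∩ X))) := by
    rw [hc, ← spanS_inf]
    exact Submodule.comapSubtypeEquivOfLe hle
  have h1 : Module.finrank k (Submodule.comap Xs.subtype Ys) = (Y ∩ X).ncard := by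
    rw [e.finrank_eq, finrank_spanS]
  have h2 := Submodule.finrank_quotient_add_finrank (Submodule.comap Xs.subtype Ys)
  have h3 : Module.finrank k Xs = X.ncard := finrank_spanS B X
  have hsub : X ∩ Y ⊆ X := Set.inter_subset_left
  have h4 : (X \ Y).ncard = X.ncard - (X ∩ Y).ncard := by
    rw [← Set.diff_self_inter]
    exact Set.ncard_diff hsub
  rw [Set.inter_comm Y X] at h1
  unfold subquotDim
  rw [h4, ← h3, ← h1]
  omega


end AuxSpan

/-- Let `V` be a finite-dimensional `k`-vector space with `q` filtrations `F^j` indexed by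
finite linearly ordered sets `Σ_j` (least element `η_j`, greatest `τ_j`, `F^j_{η_j} = 0`,
`F^j_{τ_j} = V`), admitting a common splitting by a basis.  Then (i) for `q = 2` and covers
`λ_1, λ_2`, the iterated associated graded taken in either order has the same dimension,
equal to `dim Gr_{λ_1,λ_2}(V)` (the induced filtration on a subquotient `F_{σ'}/F_σ` being
the image filtration `(G ∩ F_{σ'} + F_σ)/F_σ`), and (ii)
`dim V = Σ_{(λ_1,…,λ_q)} dim Gr_{λ_1,…,λ_q}(V)` over all multi-indices of covers. -/
theorem grDim_comm_and_sum
    {k V : Type*} [Field k] [AddCommGroup V] [Module k V] [FiniteDimensional k V]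
    {q : ℕ} (Sig : Fin q → Type*) [∀ j, Fintype (Sig j)] [∀ j, LinearOrder (Sig j)]
    (η τ : ∀ j, Sig j) (hη : ∀ j σ, η j ≤ σ) (hτ : ∀ j σ, σ ≤ τ j)
    (F : ∀ j, Sig j → Submodule k V) (hmono : ∀ j, Monotone (F j))
    (hbot : ∀ j, F j (η j) = ⊥) (htop : ∀ j, F j (τ j) = ⊤)
    (hsplit : ∃ (ι : Type) (B : Module.Basis ι k V), ∀ j σ, ∃ S : Set ι,
        F j σ = Submodule.span k (B '' S)) :
    (∀ (hq : q = 2) (lam : ∀ j, Sig j × Sig j) (_ : ∀ j, (lam j).1 ⋖ (lam j).2),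
        subquotDim k
            ((F ⟨1, by omega⟩ (lam ⟨1, by omega⟩).2 ⊓ F ⟨0, by omega⟩ (lam ⟨0, by omega⟩).2)
              ⊔ F ⟨0, by omega⟩ (lam ⟨0, by omega⟩).1)
            ((F ⟨1, by omega⟩ (lam ⟨1, by omega⟩).1 ⊓ F ⟨0, by omega⟩ (lam ⟨0, by omega⟩).2)
              ⊔ F ⟨0, by omega⟩ (lam ⟨0, by omega⟩).1) = grDim k F lam ∧
        subquotDim k
            ((F ⟨0, by omega⟩ (lam ⟨0, by omega⟩).2 ⊓ F ⟨1, by omega⟩ (lam ⟨1, by omega⟩).2)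
              ⊔ F ⟨1, by omega⟩ (lam ⟨1, by omega⟩).1)
            ((F ⟨0, by omega⟩ (lam ⟨0, by omega⟩).1 ⊓ F ⟨1, by omega⟩ (lam ⟨1, by omega⟩).2)
              ⊔ F ⟨1, by omega⟩ (lam ⟨1, by omega⟩).1) = grDim k F lam) ∧
    Module.finrank k V =
      ∑ lam ∈ Finset.univ.filter
          (fun lam : ∀ j, Sig j × Sig j => ∀ j, (lam j).1 ⋖ (lam j).2),
        grDim k F lam := by
  obtain ⟨ι, B, hB⟩ := hsplit
  haveI : Fintype ι := FiniteDimensional.fintypeBasisIndex B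
  -- canonical spanning sets
  set Ss : ∀ j, Sig j → Set ι := fun j σ => {i | B i ∈ F j σ} with hSs
  have hF : ∀ j σ, F j σ = Submodule.span k (B '' Ss j σ) := by
    intro j σ
    obtain ⟨S, hS⟩ := hB j σ
    apply le_antisymm
    · rw [hS]
      refine Submodule.span_mono (Set.image_mono ?_)
      intro i hi
      show B i ∈ F j σ
      rw [hS]
      exact Submodule.subset_span (Set.mem_image_of_mem _ hi)
    · rw [Submodule.span_le]
      rintro x ⟨i, hi, rfl⟩
      exact hi
  -- the graded set attached to a multi-index
  have hgr : ∀ lam : ∀ j, Sig j × Sig j, grDim k F lam =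
      ((⋂ j, Ss j (lam j).2) \
        (⋃ l, Ss l (lam l).1 ∩ ⋂ (j) (_ : j ≠ l), Ss j (lam j).2)).ncard := by
    intro lam
    have h1 : (⨅ j, F j (lam j).2) = Submodule.span k (B '' ⋂ j, Ss j (lam j).2) := by
      rw [spanS_iInf]
      exact iInf_congr fun j => hF j _
    have h2 : (⨆ l, F l (lam l).1 ⊓ ⨅ (j) (_ : j ≠ l), F j (lam j).2)
        = Submodule.span k
            (B '' ⋃ l, Ss l (lam l).1 ∩ ⋂ (j) (_ : j ≠ l), Ss j (lam j).2) := by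
      rw [spanS_iSup]
      refine iSup_congr fun l => ?_
      rw [spanS_inf, spanS_iInf]
      refine congrArg₂ (· ⊓ ·) (hF l _) (iInf_congr fun j => ?_)
      rw [spanS_iInf]
      exact iInf_congr fun _ => hF j _
    have h0 : grDim k F lam = subquotDim k (⨅ j, F j (lam j).2)
        (⨆ l, F l (lam l).1 ⊓ ⨅ (j) (_ : j ≠ l), F j (lam j).2) := rfl
    rw [h0, h1, h2, subquotDim_spanS]
  -- membership in the graded set
  have hGmem : ∀ (lam : ∀ j, Sig j × Sig j) (i : ι),
      i ∈ ((⋂ j, Ss j (lam j).2) \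
        (⋃ l, Ss l (lam l).1 ∩ ⋂ (j) (_ : j ≠ l), Ss j (lam j).2)) ↔
      ((∀ j, i ∈ Ss j (lam j).2) ∧
        ¬ ∃ l, i ∈ Ss l (lam l).1 ∧ ∀ j, j ≠ l → i ∈ Ss j (lam j).2) := by
    intro lam i
    simp [Set.mem_diff, Set.mem_iInter, Set.mem_iUnion, Set.mem_inter_iff]
  -- degree function
  have hdex : ∀ (i : ι) j, (Finset.univ.filter (fun σ => i ∈ Ss j σ)).Nonempty := by
    intro i j
    refine ⟨τ j, ?_⟩
    simp only [Finset.mem_filter, Finset.mem_univ, true_and]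
    show B i ∈ F j (τ j)
    rw [htop]
    trivial
  set d : ι → ∀ j, Sig j :=
    fun i j => (Finset.univ.filter (fun σ => i ∈ Ss j σ)).min' (hdex i j) with hdd
  have hd : ∀ (i : ι) j σ, i ∈ Ss j σ ↔ d i j ≤ σ := by
    intro i j σ
    constructor
    · intro h
      exact Finset.min'_le _ _ (by simp [h])
    · intro h
      have hm : i ∈ Ss j (d i j) :=
        (Finset.mem_filter.1 (Finset.min'_mem _ (hdex i j))).2
      exact hmono j h hm
  have hdη : ∀ (i : ι) j, η j < d i j := by
    intro i j
    have hni : i ∉ Ss j (η j) := by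
      show ¬ B i ∈ F j (η j)
      rw [hbot]
      simpa using B.ne_zero i
    by_contra hcon
    push_neg at hcon
    exact hni ((hd i j (η j)).2 hcon)
  -- predecessor function
  have hpex : ∀ j (b : Sig j), η j < b → (Finset.univ.filter (fun a => a < b)).Nonempty :=
    fun j b hb => ⟨η j, by simpa using hb⟩
  set pd : ∀ j, Sig j → Sig j := fun j b =>
    if h : (Finset.univ.filter (fun a => a < b)).Nonempty
    then (Finset.univ.filter (fun a => a < b)).max' h else b with hpdd
  have hpd : ∀ j (b : Sig j), η j < b → pd j b ⋖ b := by
    intro j b hb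
    have hne := hpex j b hb
    simp only [hpdd, dif_pos hne]
    constructor
    · exact (Finset.mem_filter.1 (Finset.max'_mem _ hne)).2
    · intro c hc1 hc2
      exact absurd (Finset.le_max' _ c (by simp [hc2])) (not_le.2 hc1)
  have hcu : ∀ j (a a' b : Sig j), a ⋖ b → a' ⋖ b → a = a' := by
    intro j a a' b h h'
    rcases lt_trichotomy a a' with hlt | he | hgt
    · exact absurd h'.1 (h.2 hlt)
    · exact he
    · exact absurd h.1 (h'.2 hgt)
  -- the fiber map
  set f : ι → ∀ j, Sig j × Sig j := fun i j => (pd j (d i j), d i j) with hff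
  have hfcov : ∀ (i : ι) j, (f i j).1 ⋖ (f i j).2 := fun i j => hpd j _ (hdη i j)
  -- graded set = fiber of f, for covers
  have hfiber : ∀ (lam : ∀ j, Sig j × Sig j), (∀ j, (lam j).1 ⋖ (lam j).2) →
      ((⋂ j, Ss j (lam j).2) \
        (⋃ l, Ss l (lam l).1 ∩ ⋂ (j) (_ : j ≠ l), Ss j (lam j).2)) = f ⁻¹' {lam} := by
    intro lam hcov
    ext i
    rw [hGmem lam i]
    simp only [Set.mem_preimage, Set.mem_singleton_iff]
    constructor
    · rintro ⟨h1, h2⟩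
      have hdeq : ∀ j, d i j = (lam j).2 := by
        intro j
        have hub : d i j ≤ (lam j).2 := (hd i j _).1 (h1 j)
        have hlb : (lam j).1 < d i j := by
          by_contra hcon
          push_neg at hcon
          exact h2 ⟨j, (hd i j _).2 hcon, fun j' _ => h1 j'⟩
        rcases lt_or_eq_of_le hub with hlt | he
        · exact absurd hlt ((hcov j).2 hlb)
        · exact he
      funext j
      have h1' : (f i j).1 = (lam j).1 := by
        have hc1 : (f i j).1 ⋖ (lam j).2 := by
          rw [← hdeq j]
          exact hfcov i j
        exact hcu j _ _ _ hc1 (hcov j)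
      have h2' : (f i j).2 = (lam j).2 := hdeq j
      exact Prod.ext h1' h2'
    · intro hf
      have hdeq : ∀ j, d i j = (lam j).2 := fun j => by rw [← hf]
      have hpeq : ∀ j, pd j (d i j) = (lam j).1 := fun j => by rw [← hf]
      constructor
      · intro j
        exact (hd i j _).2 (le_of_eq (hdeq j))
      · rintro ⟨l, hl, -⟩
        have : d i l ≤ (lam l).1 := (hd i l _).1 hl
        rw [hdeq l] at this
        exact absurd this (not_le.2 (hcov l).1)
  refine ⟨?_, ?_⟩
  · -- part (i)
    intro hq lam hcov
    subst hq
    have fin2 : ∀ (p : Fin 2 → Prop), (∀ i, p i) ↔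
        (p ⟨0, by omega⟩ ∧ p ⟨1, by omega⟩) := by
      intro p
      constructor
      · exact fun h => ⟨h _, h _⟩
      · rintro ⟨h0, h1⟩ ⟨iv, hiv⟩
        interval_cases iv
        exacts [h0, h1]
    have fin2e : ∀ (p : Fin 2 → Prop), (∃ i, p i) ↔
        (p ⟨0, by omega⟩ ∨ p ⟨1, by omega⟩) := by
      intro p
      constructor
      · rintro ⟨⟨iv, hiv⟩, h⟩
        interval_cases iv
        exacts [Or.inl h, Or.inr h]
      · rintro (h | h)
        exacts [⟨_, h⟩, ⟨_, h⟩]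
    have hne01 : (⟨0, by omega⟩ : Fin 2) ≠ ⟨1, by omega⟩ := by
      intro h
      simpa using congrArg Fin.val h
    have hne10 : (⟨1, by omega⟩ : Fin 2) ≠ ⟨0, by omega⟩ := fun h => hne01 h.symm
    constructor
    · simp only [hF]
      rw [← spanS_inf, ← Submodule.span_union, ← Set.image_union,
        ← spanS_inf, ← Submodule.span_union, ← Set.image_union, subquotDim_spanS, hgr]
      apply congrArg
      ext i
      rw [hGmem]
      simp only [Set.mem_diff, Set.mem_union, Set.mem_inter_iff, fin2, fin2e, hne01, hne10,
        ne_eq, not_true_eq_false, not_false_eq_true, forall_const, IsEmpty.forall_iff,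
        true_and, and_true]
      tauto
    · simp only [hF]
      rw [← spanS_inf, ← Submodule.span_union, ← Set.image_union,
        ← spanS_inf, ← Submodule.span_union, ← Set.image_union, subquotDim_spanS, hgr]
      apply congrArg
      ext i
      rw [hGmem]
      simp only [Set.mem_diff, Set.mem_union, Set.mem_inter_iff, fin2, fin2e, hne01, hne10,
        ne_eq, not_true_eq_false, not_false_eq_true, forall_const, IsEmpty.forall_iff,
        true_and, and_true]
      tauto
  · -- part (ii)
    rw [Module.finrank_eq_card_basis B, ← Finset.card_univ,
      Finset.card_eq_sum_card_fiberwise (f := f)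
        (t := Finset.univ.filter (fun lam : ∀ j, Sig j × Sig j => ∀ j, (lam j).1 ⋖ (lam j).2))
        (fun i _ => by simp only [Finset.mem_coe, Finset.mem_filter, Finset.mem_univ, true_and]; exact hfcov i)]
    refine Finset.sum_congr rfl fun lam hlam => ?_
    have hcov : ∀ j, (lam j).1 ⋖ (lam j).2 := (Finset.mem_filter.1 hlam).2
    rw [hgr, hfiber lam hcov]
    have : f ⁻¹' {lam} = ↑(Finset.univ.filter (fun i => f i = lam)) := by
      ext i
      simp
    rw [this, Set.ncard_coe_finset]
end
end

section
/- Let V be a finite-dimensional vector space over a field k equipped with q filtrations F^1, …, F^q, where F^j assigns to each element σ of a finite linearly ordered set Σ_j (with least element η_j and greatest element τ_j) a subspace F^j_σ ⊆ V, monotonically in σ, with F^j_{η_j} = 0 and F^j_{τ_j} = V, and assume there is a basis B of V such that every F^j_σ is the span of a subset of B. Then for every multi-index (σ_1, …, σ_q) ∈ Σ_1 × ⋯ × Σ_q, dim(F^1_{σ_1} ∩ ⋯ ∩ F^q_{σ_q}) = Σ over all (λ_1,…,λ_q) ∈ Σ'_1 × ⋯ × Σ'_q with m_+(λ_j) ≤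 σ_j for all j, of dim Gr_{λ_1,…,λ_q}(V), where Gr_{λ_1,…,λ_q}(V) := (⋂_{j=1}^q F^j_{m_+(λ_j)}) / (Σ_{l=1}^q (F^l_{m_-(λ_l)} ∩ ⋂_{j≠l} F^j_{m_+(λ_j)})). -/
open scoped Classical

noncomputable section

section Aux

variable {k V : Type*} [Field k] [AddCommGroup V] [Module k V]
variable {ι : Type*} (B : Module.Basis ι k V)

lemma aux_span_image_inter (S T : Set ι) :
    Submodule.span k (B '' S) ⊓ Submodule.span k (B '' T)
      = Submodule.span k (B '' (S ∩ T)) := by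
  ext x
  simp only [Submodule.mem_inf, B.mem_span_image, Set.subset_inter_iff]

lemma aux_iInf_span_image {κ : Sort*} (A : κ → Set ι) :
    ⨅ i, Submodule.span k (B '' A i) = Submodule.span k (B '' ⋂ i, A i) := by
  ext x
  simp only [Submodule.mem_iInf, B.mem_span_image, Set.subset_iInter_iff]

lemma aux_finrank_span_image [Fintype ι] (S : Set ι) :
    Module.finrank k (Submodule.span k (B '' S)) = S.ncard := by
  have hinj : Function.Injective (fun i : S => B i) :=
    B.injective.comp Subtype.val_injective
  have hli : LinearIndependent k ((↑) : (B '' S) → V) := by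
    have : LinearIndependent k (fun i : S => B i) :=
      B.linearIndependent.comp Subtype.val Subtype.val_injective
    have h2 : LinearIndependent k ((↑) : Set.range (fun i : S => B i) → V) :=
      this.linearIndepOn_id
    have hr : Set.range (fun i : S => B i) = B '' S := by
      ext x; simp
    rwa [hr] at h2
  rw [finrank_span_set_eq_card hli, ← Set.ncard_eq_toFinset_card',
    Set.ncard_image_of_injective _ B.injective]

lemma aux_covby_unique {α : Type*} [LinearOrder α] {a b c : α}
    (h1 : a ⋖ c) (h2 : b ⋖ c) : a = b := by
  rcases lt_trichotomy a b with h | h | h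
  · exact absurd h2.lt (h1.2 h)
  · exact h
  · exact absurd h1.lt (h2.2 h)

end Aux

/-- Let `V` be a finite-dimensional `k`-vector space with `q` filtrations `F^j` indexed by
finite linearly ordered sets `Σ_j` (least element `η_j`, greatest `τ_j`, `F^j_{η_j} = 0`,
`F^j_{τ_j} = V`), admitting a common splitting by a basis.  Then for every multi-index
`(σ_1,…,σ_q)`, `dim (F^1_{σ_1} ∩ ⋯ ∩ F^q_{σ_q})` equals the sum of
`dim Gr_{λ_1,…,λ_q}(V)` over all multi-indices of covers `(λ_1,…,λ_q)` with
`m_+(λ_j) ≤ σ_j` for all `j`. -/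
theorem dim_inf_filtration_eq_sum_grDim
    {k V : Type*} [Field k] [AddCommGroup V] [Module k V] [FiniteDimensional k V]
    {q : ℕ} (Sig : Fin q → Type*) [∀ j, Fintype (Sig j)] [∀ j, LinearOrder (Sig j)]
    (η τ : ∀ j, Sig j) (hη : ∀ j σ, η j ≤ σ) (hτ : ∀ j σ, σ ≤ τ j)
    (F : ∀ j, Sig j → Submodule k V) (hmono : ∀ j, Monotone (F j))
    (hbot : ∀ j, F j (η j) = ⊥) (htop : ∀ j, F j (τ j) = ⊤)
    (hsplit : ∃ (ι : Type) (B : Module.Basis ι k V), ∀ j σ, ∃ S : Set ι,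
        F j σ = Submodule.span k (B '' S))
    (σ : ∀ j, Sig j) :
    Module.finrank k ↥(⨅ j, F j (σ j)) =
      ∑ lam ∈ Finset.univ.filter
          (fun lam : ∀ j, Sig j × Sig j =>
            ∀ j, (lam j).1 ⋖ (lam j).2 ∧ (lam j).2 ≤ σ j),
        grDim k F lam := by
  classical
  obtain ⟨ι, B, hS⟩ := hsplit
  haveI : Fintype ι := FiniteDimensional.fintypeBasisIndex B
  -- the canonical splitting sets
  set T : ∀ j, Sig j → Set ι := fun j s => {i | B i ∈ F j s} with hTdef
  have hF : ∀ j s, F j s = Submodule.span k (B '' T j s) := by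
    intro j s
    obtain ⟨S, hS'⟩ := hS j s
    apply le_antisymm
    · rw [hS', Submodule.span_le]
      rintro x ⟨i, hi, rfl⟩
      apply Submodule.subset_span
      exact Set.mem_image_of_mem B (by
        show B i ∈ F j s
        rw [hS']; exact Submodule.subset_span (Set.mem_image_of_mem B hi))
    · rw [Submodule.span_le]
      rintro x ⟨i, hi, rfl⟩
      exact hi
  -- the level function
  have hne : ∀ j (i : ι), (Finset.univ.filter fun s => B i ∈ F j s).Nonempty :=
    fun j i => ⟨τ j, by simp [htop j]⟩
  set ν : ∀ j, ι → Sig j := fun j i => (Finset.univ.filter fun s => B i ∈ F j s).min' (hne j i)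
    with hνdef
  have hν : ∀ j (i : ι) s, B i ∈ F j s ↔ ν j i ≤ s := by
    intro j i s
    constructor
    · intro h
      exact Finset.min'_le _ _ (by simp [h])
    · intro h
      have hm := Finset.min'_mem _ (hne j i)
      rw [Finset.mem_filter] at hm
      exact hmono j h hm.2
  have hT' : ∀ j s, T j s = {i | ν j i ≤ s} := by
    intro j s; ext i; exact hν j i s
  have hνη : ∀ j (i : ι), η j < ν j i := by
    intro j i
    have h0 : ¬ B i ∈ F j (η j) := by
      rw [hbot j]
      simpa using B.ne_zero i
    rw [hν j i (η j)] at h0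
    exact lt_of_not_ge h0
  -- predecessor of the level
  have hpne : ∀ j (i : ι), (Finset.univ.filter fun s => s < ν j i).Nonempty :=
    fun j i => ⟨η j, by simp [hνη j i]⟩
  set p : ∀ j, ι → Sig j := fun j i => (Finset.univ.filter fun s => s < ν j i).max' (hpne j i)
    with hpdef
  have hpred : ∀ j (i : ι), p j i ⋖ ν j i := by
    intro j i
    constructor
    · have := Finset.max'_mem _ (hpne j i)
      rw [Finset.mem_filter] at this
      exact this.2
    · intro c h1 h2
      exact absurd (Finset.le_max' _ c (by simp [h2])) (not_le.2 h1)
  -- key computation of grDim for cover multi-indices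
  have hgr : ∀ lam : ∀ j, Sig j × Sig j, (∀ j, (lam j).1 ⋖ (lam j).2) →
      grDim k F lam = (Finset.univ.filter fun i : ι => ∀ j, ν j i = (lam j).2).card := by
    intro lam hlam
    set A : Set ι := ⋂ j, T j (lam j).2 with hA
    set C : Set ι := ⋃ l, (T l (lam l).1 ∩ ⋂ (j) (_ : j ≠ l), T j (lam j).2) with hC
    have hN : (⨅ j, F j (lam j).2) = Submodule.span k (B '' A) := by
      simp_rw [hF]
      exact aux_iInf_span_image B _
    have hD : (⨆ l, F l (lam l).1 ⊓ ⨅ (j) (_ : j ≠ l), F j (lam j).2)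
        = Submodule.span k (B '' C) := by
      rw [hC, Set.image_iUnion, Submodule.span_iUnion]
      apply iSup_congr
      intro l
      have h1 : (⨅ (j) (_ : j ≠ l), F j (lam j).2)
          = Submodule.span k (B '' ⋂ (j) (_ : j ≠ l), T j (lam j).2) := by
        calc (⨅ (j) (_ : j ≠ l), F j (lam j).2)
            = ⨅ j, Submodule.span k (B '' ⋂ (_ : j ≠ l), T j (lam j).2) := by
              refine iInf_congr fun j => ?_
              simp_rw [hF]
              exact aux_iInf_span_image B _
          _ = Submodule.span k (B '' ⋂ (j) (_ : j ≠ l), T j (lam j).2) :=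
              aux_iInf_span_image B _
      rw [hF l, h1, aux_span_image_inter]
    -- the denominator inside N
    have hCA : Submodule.span k (B '' (C ∩ A))
        = Submodule.span k (B '' C) ⊓ Submodule.span k (B '' A) :=
      (aux_span_image_inter B C A).symm
    have hcomap : Submodule.comap (⨅ j, F j (lam j).2).subtype
        (⨆ l, F l (lam l).1 ⊓ ⨅ (j) (_ : j ≠ l), F j (lam j).2)
        = Submodule.comap (⨅ j, F j (lam j).2).subtype
          (Submodule.span k (B '' (C ∩ A))) := by
      ext x
      simp only [Submodule.mem_comap, hD, hCA, Submodule.mem_inf, Submodule.subtype_apply]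
      exact ⟨fun h => ⟨h, hN ▸ x.2⟩, fun h => h.1⟩
    have hle : Submodule.span k (B '' (C ∩ A)) ≤ ⨅ j, F j (lam j).2 := by
      rw [hN, hCA]
      exact inf_le_right
    have hq := Submodule.finrank_quotient_add_finrank
      (Submodule.comap (⨅ j, F j (lam j).2).subtype (Submodule.span k (B '' (C ∩ A))))
    have hWrank : Module.finrank k
        (Submodule.comap (⨅ j, F j (lam j).2).subtype (Submodule.span k (B '' (C ∩ A))))
        = (C ∩ A).ncard := by
      rw [(Submodule.comapSubtypeEquivOfLe hle).finrank_eq, aux_finrank_span_image]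
    have hNrank : Module.finrank k ↥(⨅ j, F j (lam j).2) = A.ncard := by
      rw [hN, aux_finrank_span_image]
    have hgr1 : grDim k F lam = A.ncard - (C ∩ A).ncard := by
      rw [hWrank, hNrank] at hq
      unfold grDim
      rw [hcomap]
      omega
    rw [hgr1]
    have hsub : C ∩ A ⊆ A := Set.inter_subset_right
    rw [← Set.ncard_diff hsub]
    rw [← Set.ncard_coe_finset]
    congr 1
    ext i
    have hiA : i ∈ A ↔ ∀ j, ν j i ≤ (lam j).2 := by
      simp [hA, hT', Set.mem_iInter]
    have hiC : i ∈ C ↔ ∃ l, ν l i ≤ (lam l).1 ∧ ∀ j, j ≠ l → ν j i ≤ (lam j).2 := by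
      simp [hC, hT', Set.mem_iUnion, Set.mem_iInter]
    simp only [Set.mem_diff, Finset.coe_filter, Finset.mem_univ, true_and, Set.mem_setOf_eq]
    constructor
    · rintro ⟨h1, h2⟩
      have h1' := hiA.1 h1
      intro j
      refine le_antisymm (h1' j) ?_
      by_contra hlt
      rw [not_le] at hlt
      have hle' : ν j i ≤ (lam j).1 := by
        by_contra hx
        rw [not_le] at hx
        exact (hlam j).2 hx hlt
      exact h2 (Set.mem_inter (hiC.2 ⟨j, hle', fun j' _ => h1' j'⟩) h1)
    · intro h
      have h1 : i ∈ A := hiA.2 fun j => (h j).le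
      refine ⟨h1, ?_⟩
      intro hmem
      obtain ⟨l, hl1, -⟩ := hiC.1 hmem.1
      rw [h l] at hl1
      exact absurd hl1 (not_le.2 (hlam l).lt)
  -- left-hand side
  have hL : (⨅ j, F j (σ j)) = Submodule.span k (B '' ⋂ j, T j (σ j)) := by
    simp_rw [hF]; exact aux_iInf_span_image B _
  rw [hL, aux_finrank_span_image]
  have hLset : (⋂ j, T j (σ j))
      = ↑(Finset.univ.filter (fun i : ι => ∀ j, ν j i ≤ σ j)) := by
    ext i
    simp [hT', Set.mem_iInter]
  rw [hLset, Set.ncard_coe_finset]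
  -- fiberwise counting
  rw [Finset.card_eq_sum_card_fiberwise
    (f := fun i : ι => fun j => (p j i, ν j i))
    (t := Finset.univ.filter (fun lam : ∀ j, Sig j × Sig j =>
      ∀ j, (lam j).1 ⋖ (lam j).2 ∧ (lam j).2 ≤ σ j))
    (by
      intro i hi
      rw [Finset.mem_coe, Finset.mem_filter] at hi
      rw [Finset.mem_coe, Finset.mem_filter]
      exact ⟨Finset.mem_univ _, fun j => ⟨hpred j i, hi.2 j⟩⟩)]
  apply Finset.sum_congr rfl
  intro lam hlam
  rw [Finset.mem_filter] at hlam
  rw [hgr lam (fun j => (hlam.2 j).1)]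
  congr 1
  ext i
  simp only [Finset.mem_filter, Finset.mem_univ, true_and]
  constructor
  · rintro ⟨-, h2⟩ j
    have := congrFun h2 j
    exact (Prod.ext_iff.1 this).2
  · intro h
    constructor
    · intro j
      rw [h j]
      exact (hlam.2 j).2
    · funext j
      have h2 : ν j i = (lam j).2 := h j
      have h1 : p j i = (lam j).1 :=
        aux_covby_unique (h2 ▸ hpred j i) (hlam.2 j).1
      rw [Prod.ext_iff]
      exact ⟨h1, h2⟩
end
end

section
/- With the notation and hypotheses of the context, the parabolic Chern character satisfies chPar = c·exp(D) + exp(D) · Σ_{q=1}^{n} (−1)^q Σ_{I = {i_1<⋯<i_q}} Σ_{λ ∈ Σ'_{i_1}×⋯×Σ'_{i_q}} g_{I,λ} · ∏_{j=1}^{q} J(−1, α_{i_j}(λ_{i_j}), D_{i_j}) · J(−1, 0, D_{i_j})^{−1}. (Here J(−1,α,D)·J(−1,0,D)^{−1} is the formal value of e^{D}(1 − e^{−(α+1)D})/(e^{D} − 1), so this is the identity ch^{Par}(E) = ch^{Vb}(E)e^{D} + e^{D}·Σ_q (−1)^q Σ_I Σ_λ ch(ξ_{I*}Gr^{I}_{λ})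 ∏_j e^{D_{i_j}}(1 − e^{−(α_{i_j}(λ_{i_j})+1)D_{i_j}})/(e^{D_{i_j}} − 1).) -/
open scoped Classical

noncomputable section

variable {A : Type*} [CommRing A] [Algebra ℝ A]

/-- `exp x = Σ_{k ≥ 0} x^k/k!` for a nilpotent element `x`, as a finite sum (the terms with
`k ≥ nilpotencyClass x` vanish). -/
def nexp (x : A) : A :=
  ∑ m ∈ Finset.range (nilpotencyClass x), ((m.factorial : ℝ))⁻¹ • x ^ m

/-- `J(a,b,x) = Σ_{k ≥ 0} (-1)^k ((b^{k+1} - a^{k+1})/(k+1)!) x^k`, the formal value of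
`∫_a^b exp (-ρ x) dρ` for a nilpotent element `x` (a finite sum). -/
def Jf (a b : ℝ) (x : A) : A :=
  ∑ m ∈ Finset.range (nilpotencyClass x),
    ((-1 : ℝ) ^ m * ((b ^ (m + 1) - a ^ (m + 1)) / (m + 1).factorial)) • x ^ m


open Finset

lemma pow_eq_zero_of_class_le {x : A} (hx : IsNilpotent x) {m : ℕ}
    (h : nilpotencyClass x ≤ m) : x ^ m = 0 :=
  pow_eq_zero_of_le h (pow_nilpotencyClass hx)

lemma sum_ext {x : A} (hx : IsNilpotent x) {M : ℕ} (h : nilpotencyClass x ≤ M) (f : ℕ → ℝ) :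
    ∑ m ∈ range (nilpotencyClass x), f m • x ^ m = ∑ m ∈ range M, f m • x ^ m := by
  refine Finset.sum_subset (range_subset_range.2 h) fun m _ hm => ?_
  rw [pow_eq_zero_of_class_le hx (le_of_not_gt fun hc => hm (mem_range.2 hc)), smul_zero]

lemma Jf_eq (a b : ℝ) {x : A} (hx : IsNilpotent x) {M : ℕ} (h : nilpotencyClass x ≤ M) :
    Jf a b x = ∑ m ∈ range M,
      ((-1 : ℝ) ^ m * ((b ^ (m + 1) - a ^ (m + 1)) / (m + 1).factorial)) • x ^ m :=
  sum_ext hx h _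

lemma nexp_eq {x : A} (hx : IsNilpotent x) {M : ℕ} (h : nilpotencyClass x ≤ M) :
    nexp x = ∑ m ∈ range M, ((m.factorial : ℝ))⁻¹ • x ^ m :=
  sum_ext hx h _

lemma cauchy {x : A} {N : ℕ} (hx : x ^ N = 0) (p q : ℕ → ℝ) :
    (∑ m ∈ range N, p m • x ^ m) * (∑ m ∈ range N, q m • x ^ m) =
      ∑ m ∈ range N, (∑ k ∈ range (m + 1), p k * q (m - k)) • x ^ m := by
  have hR : ∑ m ∈ range N, (∑ k ∈ range (m + 1), p k * q (m - k)) • x ^ m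
      = ∑ m ∈ range N, ∑ k ∈ range (m + 1),
          (fun j l => (p j * q l) • (x ^ j * x ^ l)) k (m - k) := by
    refine Finset.sum_congr rfl fun m _ => ?_
    rw [Finset.sum_smul]
    refine Finset.sum_congr rfl fun k hk => ?_
    show (p k * q (m - k)) • x ^ m = (p k * q (m - k)) • (x ^ k * x ^ (m - k))
    rw [← pow_add, Nat.add_sub_cancel' (Nat.lt_succ_iff.1 (mem_range.1 hk))]
  rw [hR, Finset.sum_range_diag_flip N (fun j l => (p j * q l) • (x ^ j * x ^ l)),
    Finset.sum_mul_sum]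
  refine Finset.sum_congr rfl fun j hj => ?_
  have h1 : ∑ k ∈ range N, (p j • x ^ j) * (q k • x ^ k)
      = ∑ k ∈ range N, (p j * q k) • (x ^ j * x ^ k) :=
    Finset.sum_congr rfl fun k _ => smul_mul_smul_comm _ _ _ _
  rw [h1]
  refine (Finset.sum_subset (range_subset_range.2 (Nat.sub_le N j)) fun k _ hk => ?_).symm
  have hjk : N ≤ j + k := by
    have := le_of_not_gt fun hc => hk (mem_range.2 hc)
    omega
  rw [← pow_add, pow_eq_zero_of_le hjk hx, smul_zero]

lemma Jf_self (a : ℝ) (x : A) : Jf a a x = 0 := by simp [Jf]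

lemma Jf_add_Jf (a b c : ℝ) (x : A) : Jf a b x + Jf b c x = Jf a c x := by
  rw [Jf, Jf, Jf, ← Finset.sum_add_distrib]
  refine Finset.sum_congr rfl fun m _ => ?_
  rw [← add_smul]
  congr 1
  ring

lemma coef_c1 (m : ℕ) :
    ∑ k ∈ range (m + 1),
      ((-1 : ℝ) ^ k * (((1:ℝ) ^ (k + 1) - (0:ℝ) ^ (k + 1)) / (k + 1).factorial)) *
        (((m - k).factorial : ℝ))⁻¹ = (((m + 1).factorial : ℝ))⁻¹ := by
  have halt : ∑ k ∈ range (m + 2), (-1 : ℝ) ^ k * 1 ^ (m + 1 - k) * (m + 1).choose k = 0 := by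
    have h := add_pow (-1 : ℝ) 1 (m + 1)
    simp only [neg_add_cancel, zero_pow (Nat.succ_ne_zero m)] at h
    exact h.symm
  have hsum : ∑ k ∈ range (m + 1), (-1 : ℝ) ^ k * ((m + 1).choose (k + 1) : ℝ) = 1 := by
    rw [Finset.sum_range_succ'] at halt
    simp only [one_pow, mul_one, pow_zero, one_mul, Nat.choose_zero_right, Nat.cast_one] at halt
    have : ∑ k ∈ range (m + 1), (-1 : ℝ) ^ (k + 1) * ((m + 1).choose (k + 1) : ℝ) = -1 := by
      linarith [halt]
    calc ∑ k ∈ range (m + 1), (-1 : ℝ) ^ k * ((m + 1).choose (k + 1) : ℝ)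
        = -∑ k ∈ range (m + 1), (-1 : ℝ) ^ (k + 1) * ((m + 1).choose (k + 1) : ℝ) := by
          rw [← Finset.sum_neg_distrib]
          exact Finset.sum_congr rfl fun k _ => by ring
      _ = 1 := by rw [this]; ring
  have hterm : ∀ k ∈ range (m + 1),
      ((-1 : ℝ) ^ k * (((1:ℝ) ^ (k + 1) - (0:ℝ) ^ (k + 1)) / (k + 1).factorial)) *
        (((m - k).factorial : ℝ))⁻¹
      = ((-1 : ℝ) ^ k * ((m + 1).choose (k + 1) : ℝ)) * (((m + 1).factorial : ℝ))⁻¹ := by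
    intro k hk
    have hkm := Nat.lt_succ_iff.1 (mem_range.1 hk)
    have hch : ((m + 1).choose (k + 1) * (k + 1).factorial * (m - k).factorial : ℕ)
        = (m + 1).factorial := by
      have h2 : m + 1 - (k + 1) = m - k := by omega
      have := Nat.choose_mul_factorial_mul_factorial (Nat.succ_le_succ hkm)
      rwa [h2] at this
    have hf1 : ((k + 1).factorial : ℝ) ≠ 0 := Nat.cast_ne_zero.2 (Nat.factorial_ne_zero _)
    have hf2 : (((m - k).factorial : ℕ) : ℝ) ≠ 0 := Nat.cast_ne_zero.2 (Nat.factorial_ne_zero _)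
    have hf3 : (((m + 1).factorial : ℕ) : ℝ) ≠ 0 := Nat.cast_ne_zero.2 (Nat.factorial_ne_zero _)
    have hchR : (((m + 1).choose (k + 1) : ℝ)) * ((k + 1).factorial : ℝ) *
        ((m - k).factorial : ℝ) = ((m + 1).factorial : ℝ) := by
      exact_mod_cast congrArg (Nat.cast : ℕ → ℝ) hch
    rw [one_pow, zero_pow (Nat.succ_ne_zero k)]
    field_simp
    linear_combination (-1:ℝ) * hchR
  rw [Finset.sum_congr rfl hterm, ← Finset.sum_mul, hsum, one_mul]

lemma coef_Jm10 (m : ℕ) :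
    (-1 : ℝ) ^ m * (((0:ℝ) ^ (m + 1) - (-1 : ℝ) ^ (m + 1)) / (m + 1).factorial)
      = (((m + 1).factorial : ℝ))⁻¹ := by
  have h1 : (-1 : ℝ) ^ m * ((0:ℝ) ^ (m + 1) - (-1 : ℝ) ^ (m + 1)) = 1 := by
    rw [zero_pow (Nat.succ_ne_zero m), pow_succ]
    have : (-1 : ℝ) ^ m * (-1 : ℝ) ^ m = 1 := by
      rw [← pow_add]
      exact Even.neg_one_pow ⟨m, rfl⟩
    linear_combination this
  rw [mul_div_assoc', h1, one_div]

lemma J01_mul_nexp {x : A} (hx : IsNilpotent x) : Jf 0 1 x * nexp x = Jf (-1) 0 x := by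
  rw [Jf, nexp, cauchy (pow_nilpotencyClass hx), Jf]
  refine Finset.sum_congr rfl fun m _ => ?_
  congr 1
  rw [coef_c1 m]
  exact (coef_Jm10 m).symm

lemma nexp_mul_nexp (x y : A) (hx : IsNilpotent x) (hy : IsNilpotent y) :
    nexp x * nexp y = nexp (x + y) := by
  have hxy : IsNilpotent (x + y) := Commute.isNilpotent_add (Commute.all x y) hx hy
  set cx := nilpotencyClass x with hcx
  set cy := nilpotencyClass y with hcy
  set cz := nilpotencyClass (x + y) with hcz
  set M := cx + cy + cz with hM
  rw [nexp_eq hx (by omega : cx ≤ M), nexp_eq hy (by omega : cy ≤ M),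
    nexp_eq hxy (by omega : cz ≤ M), Finset.sum_mul_sum]
  have hRHS : ∑ m ∈ range M, ((m.factorial : ℝ))⁻¹ • (x + y) ^ m
      = ∑ m ∈ range M, ∑ k ∈ range (m + 1),
          (fun j l => (((j.factorial : ℝ))⁻¹ * ((l.factorial : ℝ))⁻¹) • (x ^ j * y ^ l))
            k (m - k) := by
    refine Finset.sum_congr rfl fun m _ => ?_
    rw [add_pow, Finset.smul_sum]
    refine Finset.sum_congr rfl fun k hk => ?_
    have hkm := Nat.lt_succ_iff.1 (mem_range.1 hk)
    show (m.factorial : ℝ)⁻¹ • (x ^ k * y ^ (m - k) * (m.choose k : A))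
        = (((k.factorial : ℝ))⁻¹ * (((m - k).factorial : ℝ))⁻¹) • (x ^ k * y ^ (m - k))
    rw [mul_comm (x ^ k * y ^ (m - k)) ((m.choose k : A)), ← nsmul_eq_mul,
      ← Nat.cast_smul_eq_nsmul ℝ, smul_smul]
    congr 1
    have hch : ((m.choose k : ℝ)) * (k.factorial : ℝ) * ((m - k).factorial : ℝ)
        = (m.factorial : ℝ) := by
      exact_mod_cast Nat.choose_mul_factorial_mul_factorial hkm
    have hf1 : ((k.factorial : ℕ) : ℝ) ≠ 0 := Nat.cast_ne_zero.2 (Nat.factorial_ne_zero _)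
    have hf2 : (((m - k).factorial : ℕ) : ℝ) ≠ 0 := Nat.cast_ne_zero.2 (Nat.factorial_ne_zero _)
    have hf3 : ((m.factorial : ℕ) : ℝ) ≠ 0 := Nat.cast_ne_zero.2 (Nat.factorial_ne_zero _)
    field_simp
    linear_combination hch
  rw [hRHS, Finset.sum_range_diag_flip M
    (fun j l => (((j.factorial : ℝ))⁻¹ * ((l.factorial : ℝ))⁻¹) • (x ^ j * y ^ l))]
  refine Finset.sum_congr rfl fun j hj => ?_
  have h1 : ∑ k ∈ range M, ((j.factorial : ℝ))⁻¹ • x ^ j * ((k.factorial : ℝ))⁻¹ • y ^ k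
      = ∑ k ∈ range M, (((j.factorial : ℝ))⁻¹ * ((k.factorial : ℝ))⁻¹) • (x ^ j * y ^ k) :=
    Finset.sum_congr rfl fun k _ => smul_mul_smul_comm _ _ _ _
  rw [h1]
  refine (Finset.sum_subset (range_subset_range.2 (Nat.sub_le M j)) fun k hk2 hk => ?_).symm
  have hkMj : M - j ≤ k := le_of_not_gt fun hc => hk (mem_range.2 hc)
  have hjM := mem_range.1 hj
  rcases le_or_gt cx j with hcase | hcase
  · rw [pow_eq_zero_of_class_le hx hcase, zero_mul, smul_zero]
  · have : cy ≤ k := by omega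
    rw [pow_eq_zero_of_class_le hy this, mul_zero, smul_zero]

lemma nexp_zero : nexp (0 : A) = 1 := by
  rcases subsingleton_or_nontrivial A with h | h
  · exact Subsingleton.elim _ _
  · rw [nexp, nilpotencyClass_zero]
    simp

lemma prod_nexp {ι : Type*} (s : Finset ι) (D : ι → A) (hD : ∀ i, IsNilpotent (D i)) :
    ∏ i ∈ s, nexp (D i) = nexp (∑ i ∈ s, D i) := by
  induction s using Finset.cons_induction with
  | empty => simp [nexp_zero]
  | cons a s ha ih =>
    rw [Finset.prod_cons, Finset.sum_cons, ih,
      nexp_mul_nexp _ _ (hD a) (isNilpotent_sum fun i _ => hD i)]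

lemma Jf_eq_one_add {x : A} (hx : IsNilpotent x) {a b : ℝ} (hab : b - a = 1) :
    ∃ u : A, IsNilpotent u ∧ Jf a b x = 1 + u := by
  rw [Jf_eq a b hx (Nat.le_succ _), Finset.sum_range_succ']
  have h0 : ((-1 : ℝ) ^ 0 * ((b ^ (0 + 1) - a ^ (0 + 1)) / (0 + 1).factorial)) • x ^ 0
      = 1 := by
    simp [hab]
  rw [h0]
  refine ⟨_, ?_, (add_comm _ 1)⟩
  refine isNilpotent_sum fun m _ => ?_
  exact (IsNilpotent.pow_succ m hx).smul _

lemma isUnit_Jf01 {x : A} (hx : IsNilpotent x) : IsUnit (Jf 0 1 x) := by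
  obtain ⟨u, hu, h⟩ := Jf_eq_one_add hx (by norm_num : (1 : ℝ) - 0 = 1)
  rw [h]; exact hu.isUnit_one_add

lemma isUnit_Jfm10 {x : A} (hx : IsNilpotent x) : IsUnit (Jf (-1) 0 x) := by
  obtain ⟨u, hu, h⟩ := Jf_eq_one_add hx (by norm_num : (0 : ℝ) - (-1) = 1)
  rw [h]; exact hu.isUnit_one_add

lemma telescope {S : Type*} [Fintype S] [LinearOrder S]
    (x : A) (F G : S → ℝ)
    (hmin : ∀ s : S, (∀ t, s ≤ t) → F s = -1)
    (hcov : ∀ s s' : S, s ⋖ s' → F s' = G s) (b : S) :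
    ∑ s ∈ Finset.univ.filter (fun s => s ≤ b), Jf (F s) (G s) x = Jf (-1) (G b) x := by
  suffices H : ∀ (k : ℕ) (b : S), (Finset.univ.filter (fun s => s < b)).card = k →
      ∑ s ∈ Finset.univ.filter (fun s => s ≤ b), Jf (F s) (G s) x = Jf (-1) (G b) x from
    H _ b rfl
  intro k
  induction k using Nat.strong_induction_on with
  | _ k IH =>
    intro b hb
    rcases Finset.eq_empty_or_nonempty (Finset.univ.filter (fun s => s < b)) with he | hne
    · have hmb : ∀ t, b ≤ t := fun t =>
        le_of_not_gt fun hc => (Finset.eq_empty_iff_forall_notMem.1 he t)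
          (Finset.mem_filter.2 ⟨Finset.mem_univ t, hc⟩)
      have hIic : Finset.univ.filter (fun s => s ≤ b) = {b} := by
        ext s
        simp only [Finset.mem_filter, Finset.mem_univ, true_and, Finset.mem_singleton]
        exact ⟨fun h => le_antisymm h (hmb s), fun h => h ▸ le_rfl⟩
      rw [hIic, Finset.sum_singleton, hmin b hmb]
    · set b' := (Finset.univ.filter (fun s => s < b)).max' hne with hb'
      have hb'b : b' < b :=
        (Finset.mem_filter.1 ((Finset.univ.filter (fun s => s < b)).max'_mem hne)).2
      have hcov' : b' ⋖ b := by
        refine ⟨hb'b, fun c hc1 hc2 => ?_⟩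
        have hcmem : c ∈ Finset.univ.filter (fun s => s < b) :=
          Finset.mem_filter.2 ⟨Finset.mem_univ c, hc2⟩
        exact absurd (Finset.le_max' _ c hcmem) (not_le.2 hc1)
      have hIic : Finset.univ.filter (fun s => s ≤ b)
          = insert b (Finset.univ.filter (fun s => s ≤ b')) := by
        ext s
        simp only [Finset.mem_filter, Finset.mem_univ, true_and, Finset.mem_insert]
        constructor
        · intro h
          rcases eq_or_lt_of_le h with h1 | h1
          · exact Or.inl h1
          · exact Or.inr (Finset.le_max' (Finset.univ.filter (fun u => u < b)) s
              (Finset.mem_filter.2 ⟨Finset.mem_univ s, h1⟩))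
        · rintro (rfl | h)
          · exact le_rfl
          · exact h.trans hb'b.le
      have hnotmem : b ∉ Finset.univ.filter (fun s => s ≤ b') := fun hc =>
        absurd (Finset.mem_filter.1 hc).2 (not_le.2 hb'b)
      have hss : Finset.univ.filter (fun s => s < b') ⊂ Finset.univ.filter (fun s => s < b) := by
        constructor
        · exact fun s hs => Finset.mem_filter.2
            ⟨Finset.mem_univ s, ((Finset.mem_filter.1 hs).2.trans hb'b)⟩
        · exact fun hc =>
            absurd (Finset.mem_filter.1 (hc (Finset.mem_filter.2 ⟨Finset.mem_univ b', hb'b⟩))).2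
              (lt_irrefl b')
      have hcard : (Finset.univ.filter (fun s => s < b')).card < k :=
        hb ▸ Finset.card_lt_card hss
      rw [hIic, Finset.sum_insert hnotmem, IH _ hcard b' rfl, hcov b' b hcov',
        add_comm, Jf_add_Jf]

lemma telescope_univ {S : Type*} [Fintype S] [LinearOrder S]
    (x : A) (F G : S → ℝ) (τ : S) (hτ : ∀ s, s ≤ τ)
    (hmin : ∀ s : S, (∀ t, s ≤ t) → F s = -1)
    (hcov : ∀ s s' : S, s ⋖ s' → F s' = G s) :
    ∑ s : S, Jf (F s) (G s) x = Jf (-1) (G τ) x := by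
  rw [show (Finset.univ : Finset S) = Finset.univ.filter (fun s => s ≤ τ) by
    ext s; simp [hτ s]]
  exact telescope x F G hmin hcov τ


variable {n : ℕ} {Sig : Fin n → Type*} [∀ i, Fintype (Sig i)] [∀ i, LinearOrder (Sig i)]

/-- `c_σ = c + Σ_{q=1}^n (-1)^q Σ_{I = {i_1<⋯<i_q}} Σ_{λ : σ_{i_j} < λ_{i_j} ∀ j} g_{I,λ}`,
the Chern character of the component sheaf `E_σ` of a locally abelian parabolic bundle,
computed via the Koszul-style resolution.  Here `λ` runs over multi-indices of covers
(risers) `λ_i` of `Σ_i` for `i ∈ I` with `σ_i ≤ m_-(λ_i)`. -/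
def cSigma (c : A) (g : ∀ I : Finset (Fin n), ((i : I) → Sig i.1 × Sig i.1) → A)
    (σ : ∀ i, Sig i) : A :=
  c + ∑ I ∈ Finset.univ.filter (fun I : Finset (Fin n) => I.Nonempty),
        (-1 : A) ^ I.card *
          ∑ lam ∈ Finset.univ.filter
              (fun lam : (i : I) → Sig i.1 × Sig i.1 =>
                ∀ i : I, (lam i).1 ⋖ (lam i).2 ∧ σ i.1 ≤ (lam i).1),
            g I lam

/-- The parabolic Chern character, given by the Iyer–Simpson integral formula evaluated
formally: `chPar = (∏_i J(0,1,D_i))⁻¹ Σ_{σ} c_σ ∏_i J(α_-(σ_i), α_+(σ_i), D_i)`. -/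
def chPar (D : Fin n → A) (αm αp : ∀ i, Sig i → ℝ) (c : A)
    (g : ∀ I : Finset (Fin n), ((i : I) → Sig i.1 × Sig i.1) → A) : A :=
  Ring.inverse (∏ i, Jf 0 1 (D i)) *
    ∑ σ : ∀ i, Sig i, cSigma c g σ * ∏ i, Jf (αm i (σ i)) (αp i (σ i)) (D i)

/-- Theorem 3.6 (`bigequationtheorem`): the parabolic Chern character of a locally abelian
parabolic bundle satisfies
`ch^{Par}(E) = ch^{Vb}(E) e^{D} + e^{D} Σ_{q=1}^n (-1)^q Σ_{I} Σ_{λ} ch(ξ_{I*} Gr^I_λ)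
  ∏_j e^{D_{i_j}} (1 - e^{-(α_{i_j}(λ_{i_j})+1) D_{i_j}})/(e^{D_{i_j}} - 1)`,
the last factor being `J(-1, α_{i_j}(λ_{i_j}), D_{i_j}) ⬝ J(-1, 0, D_{i_j})⁻¹`. -/
theorem chPar_eq_bigequation
    {A : Type*} [CommRing A] [Algebra ℝ A]
    {n : ℕ} (hn : 1 ≤ n)
    {Sig : Fin n → Type*} [∀ i, Fintype (Sig i)] [∀ i, LinearOrder (Sig i)]
    [∀ i, Nontrivial (Sig i)]
    (D : Fin n → A) (hD : ∀ i, IsNilpotent (D i))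
    (η τ : ∀ i, Sig i) (hη : ∀ i σ, η i ≤ σ) (hτ : ∀ i σ, σ ≤ τ i)
    (α : ∀ i, Sig i × Sig i → ℝ)
    (hα : ∀ i p, p.1 ⋖ p.2 → α i p ∈ Set.Ioc (-1 : ℝ) 0)
    (hαmono : ∀ i (p p' : Sig i × Sig i),
        p.1 ⋖ p.2 → p'.1 ⋖ p'.2 → p.1 ≤ p'.1 → α i p ≤ α i p')
    (αp αm : ∀ i, Sig i → ℝ)
    (hαpτ : ∀ i, αp i (τ i) = 0)
    (hαpc : ∀ i (σ σ' : Sig i), σ ⋖ σ' → αp i σ = α i (σ, σ'))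
    (hαmη : ∀ i, αm i (η i) = -1)
    (hαmc : ∀ i (σ σ' : Sig i), σ ⋖ σ' → αm i σ' = α i (σ, σ'))
    (c : A)
    (g : ∀ I : Finset (Fin n), ((i : I) → Sig i.1 × Sig i.1) → A) :
    chPar D αm αp c g =
      c * nexp (∑ i, D i) +
        nexp (∑ i, D i) *
          ∑ I ∈ Finset.univ.filter (fun I : Finset (Fin n) => I.Nonempty),
            (-1 : A) ^ I.card *
              ∑ lam ∈ Finset.univ.filter
                  (fun lam : (i : I) → Sig i.1 × Sig i.1 =>
                    ∀ i : I, (lam i).1 ⋖ (lam i).2),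
                g I lam *
                  ∏ i : I,
                    (Jf (-1) (α i.1 (lam i)) (D i.1) *
                      Ring.inverse (Jf (-1) 0 (D i.1))) := by
  classical
  have hEprod : (∏ i, Jf 0 1 (D i)) * nexp (∑ i, D i) = ∏ i, Jf (-1) 0 (D i) := by
    rw [← prod_nexp Finset.univ D hD, ← Finset.prod_mul_distrib]
    exact Finset.prod_congr rfl fun i _ => J01_mul_nexp (hD i)
  have hunit : IsUnit (∏ i, Jf 0 1 (D i)) :=
    Finset.prod_induction _ IsUnit (fun a b ha hb => ha.mul hb) isUnit_one
      (fun i _ => isUnit_Jf01 (hD i))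
  have hmin : ∀ i (s : Sig i), (∀ t, s ≤ t) → αm i s = -1 := by
    intro i s hs
    have hseq : s = η i := le_antisymm (hs (η i)) (hη i s)
    rw [hseq, hαmη i]
  have hcv : ∀ i (s s' : Sig i), s ⋖ s' → αm i s' = αp i s := by
    intro i s s' h
    rw [hαmc i s s' h, hαpc i s s' h]
  have htel_univ : ∀ i, (∑ s : Sig i, Jf (αm i s) (αp i s) (D i)) = Jf (-1) 0 (D i) := by
    intro i
    have h := telescope_univ (D i) (αm i) (αp i) (τ i) (hτ i) (hmin i) (hcv i)
    rwa [hαpτ i] at h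
  have htel : ∀ i (b : Sig i),
      (∑ s ∈ Finset.univ.filter (fun s => s ≤ b), Jf (αm i s) (αp i s) (D i))
        = Jf (-1) (αp i b) (D i) := fun i b => telescope (D i) (αm i) (αp i) (hmin i) (hcv i) b
  -- the common normal form
  have hL : (∑ σ : ∀ i, Sig i, cSigma c g σ * ∏ i, Jf (αm i (σ i)) (αp i (σ i)) (D i))
      = c * (∏ i, Jf (-1) 0 (D i)) +
        ∑ I ∈ Finset.univ.filter (fun I : Finset (Fin n) => I.Nonempty),
          (-1 : A) ^ I.card *
            ∑ lam ∈ Finset.univ.filter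
                (fun lam : (i : I) → Sig i.1 × Sig i.1 =>
                  ∀ i : I, (lam i).1 ⋖ (lam i).2),
              g I lam *
                ((∏ i ∈ Finset.univ \ I, Jf (-1) 0 (D i)) *
                  ∏ x ∈ I.attach, Jf (-1) (α x.1 (lam x)) (D x.1)) := by
    simp only [cSigma, add_mul, Finset.sum_add_distrib]
    congr 1
    · -- c - part
      rw [← Finset.mul_sum]
      congr 1
      have hfac0 := Finset.prod_univ_sum (fun i => (Finset.univ : Finset (Sig i)))
        (fun i s => Jf (αm i s) (αp i s) (D i))
      rw [Fintype.piFinset_univ] at hfac0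
      rw [← hfac0]
      exact Finset.prod_congr rfl fun i _ => htel_univ i
    · -- g - part
      have e1 : ∀ σ : ∀ i, Sig i,
          (∑ I ∈ Finset.univ.filter (fun I : Finset (Fin n) => I.Nonempty),
            (-1 : A) ^ I.card *
              ∑ lam ∈ Finset.univ.filter
                  (fun lam : (i : I) → Sig i.1 × Sig i.1 =>
                    ∀ i : I, (lam i).1 ⋖ (lam i).2 ∧ σ i.1 ≤ (lam i).1),
                g I lam) * ∏ i, Jf (αm i (σ i)) (αp i (σ i)) (D i)
          = ∑ I ∈ Finset.univ.filter (fun I : Finset (Fin n) => I.Nonempty),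
              (-1 : A) ^ I.card *
                ∑ lam ∈ Finset.univ.filter
                    (fun lam : (i : I) → Sig i.1 × Sig i.1 =>
                      ∀ i : I, (lam i).1 ⋖ (lam i).2 ∧ σ i.1 ≤ (lam i).1),
                  g I lam * ∏ i, Jf (αm i (σ i)) (αp i (σ i)) (D i) := by
        intro σ
        rw [Finset.sum_mul]
        exact Finset.sum_congr rfl fun I _ => by rw [mul_assoc, Finset.sum_mul]
      rw [Finset.sum_congr rfl fun σ _ => e1 σ, Finset.sum_comm]
      refine Finset.sum_congr rfl fun I hI => ?_
      rw [← Finset.mul_sum]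
      congr 1
      have hLset : ∀ σ : ∀ i, Sig i,
          Finset.univ.filter (fun lam : (i : I) → Sig i.1 × Sig i.1 =>
            ∀ i : I, (lam i).1 ⋖ (lam i).2 ∧ σ i.1 ≤ (lam i).1)
          = (Finset.univ.filter (fun lam : (i : I) → Sig i.1 × Sig i.1 =>
              ∀ i : I, (lam i).1 ⋖ (lam i).2)).filter
              (fun lam => ∀ i : I, σ i.1 ≤ (lam i).1) := by
        intro σ
        rw [Finset.filter_filter]
        refine Finset.filter_congr fun lam _ => ?_
        constructor
        · intro h; exact ⟨fun i => (h i).1, fun i => (h i).2⟩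
        · intro h i; exact ⟨h.1 i, h.2 i⟩
      have e2 : ∀ σ : ∀ i, Sig i,
          (∑ lam ∈ Finset.univ.filter
              (fun lam : (i : I) → Sig i.1 × Sig i.1 =>
                ∀ i : I, (lam i).1 ⋖ (lam i).2 ∧ σ i.1 ≤ (lam i).1),
            g I lam * ∏ i, Jf (αm i (σ i)) (αp i (σ i)) (D i))
          = ∑ lam ∈ Finset.univ.filter
              (fun lam : (i : I) → Sig i.1 × Sig i.1 =>
                ∀ i : I, (lam i).1 ⋖ (lam i).2),
              if (∀ i : I, σ i.1 ≤ (lam i).1) then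
                g I lam * ∏ i, Jf (αm i (σ i)) (αp i (σ i)) (D i)
              else 0 := by
        intro σ
        rw [hLset σ, Finset.sum_filter]
      rw [Finset.sum_congr rfl fun σ _ => e2 σ, Finset.sum_comm]
      refine Finset.sum_congr rfl fun lam hlam => ?_
      have hQ : ∀ i : I, (lam i).1 ⋖ (lam i).2 := (Finset.mem_filter.1 hlam).2
      rw [← Finset.sum_filter, ← Finset.mul_sum]
      congr 1
      -- factorization of the constrained sum over σ
      have hset : Finset.univ.filter (fun σ : ∀ i, Sig i => ∀ i : I, σ i.1 ≤ (lam i).1)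
          = Fintype.piFinset (fun i =>
              if h : i ∈ I then Finset.univ.filter (fun s => s ≤ (lam ⟨i, h⟩).1)
              else Finset.univ) := by
        ext σ
        simp only [Finset.mem_filter, Finset.mem_univ, true_and, Fintype.mem_piFinset]
        constructor
        · intro h i
          by_cases hi : i ∈ I
          · rw [dif_pos hi]
            exact Finset.mem_filter.2 ⟨Finset.mem_univ _, h ⟨i, hi⟩⟩
          · rw [dif_neg hi]
            exact Finset.mem_univ _
        · intro h i
          have h2 := h i.1
          rw [dif_pos i.2] at h2
          exact (Finset.mem_filter.1 h2).2
      have hfac := Finset.prod_univ_sum (fun i =>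
          if h : i ∈ I then Finset.univ.filter (fun s => s ≤ (lam ⟨i, h⟩).1)
          else Finset.univ)
        (fun i s => Jf (αm i s) (αp i s) (D i))
      rw [hset, ← hfac, ← Finset.prod_sdiff (Finset.subset_univ I)]
      congr 1
      · refine Finset.prod_congr rfl fun i hi => ?_
        rw [dif_neg (Finset.mem_sdiff.1 hi).2]
        exact htel_univ i
      · rw [← Finset.prod_attach I (fun i =>
          ∑ s ∈ (if h : i ∈ I then Finset.univ.filter (fun s => s ≤ (lam ⟨i, h⟩).1)
              else Finset.univ), Jf (αm i s) (αp i s) (D i))]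
        refine Finset.prod_congr rfl fun x _ => ?_
        rw [dif_pos x.2]
        have h3 := htel x.1 (lam x).1
        rw [hαpc x.1 (lam x).1 (lam x).2 (hQ x), Prod.mk.eta] at h3
        exact h3
  have hR : (∏ i, Jf 0 1 (D i)) *
      (c * nexp (∑ i, D i) +
        nexp (∑ i, D i) *
          ∑ I ∈ Finset.univ.filter (fun I : Finset (Fin n) => I.Nonempty),
            (-1 : A) ^ I.card *
              ∑ lam ∈ Finset.univ.filter
                  (fun lam : (i : I) → Sig i.1 × Sig i.1 =>
                    ∀ i : I, (lam i).1 ⋖ (lam i).2),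
                g I lam *
                  ∏ i : I,
                    (Jf (-1) (α i.1 (lam i)) (D i.1) *
                      Ring.inverse (Jf (-1) 0 (D i.1))))
      = c * (∏ i, Jf (-1) 0 (D i)) +
        ∑ I ∈ Finset.univ.filter (fun I : Finset (Fin n) => I.Nonempty),
          (-1 : A) ^ I.card *
            ∑ lam ∈ Finset.univ.filter
                (fun lam : (i : I) → Sig i.1 × Sig i.1 =>
                  ∀ i : I, (lam i).1 ⋖ (lam i).2),
              g I lam *
                ((∏ i ∈ Finset.univ \ I, Jf (-1) 0 (D i)) *
                  ∏ x ∈ I.attach, Jf (-1) (α x.1 (lam x)) (D x.1)) := by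
    rw [mul_add]
    congr 1
    · rw [mul_left_comm, hEprod]
    · rw [← mul_assoc, hEprod, Finset.mul_sum]
      refine Finset.sum_congr rfl fun I hI => ?_
      rw [mul_left_comm]
      congr 1
      rw [Finset.mul_sum]
      refine Finset.sum_congr rfl fun lam hlam => ?_
      have h2 : (∏ x ∈ I.attach, Jf (-1) 0 (D x.1)) *
          (∏ x ∈ I.attach, (Jf (-1) (α x.1 (lam x)) (D x.1) *
            Ring.inverse (Jf (-1) 0 (D x.1))))
          = ∏ x ∈ I.attach, Jf (-1) (α x.1 (lam x)) (D x.1) := by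
        rw [← Finset.prod_mul_distrib]
        refine Finset.prod_congr rfl fun x _ => ?_
        rw [mul_left_comm, Ring.mul_inverse_cancel _ (isUnit_Jfm10 (hD x.1)), mul_one]
      rw [← Finset.prod_sdiff (Finset.subset_univ I), Finset.univ_eq_attach,
        ← Finset.prod_attach I (fun i => Jf (-1) 0 (D i)), ← h2]
      ring
  rw [chPar, hL.trans hR.symm, Ring.inverse_mul_cancel_left _ _ hunit]
end
end
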